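/- arXiv:1412.2275 — 2 statements merged into one kernel-verified Lean document; each statement's English description precedes it below -/
import Mathlib

section
/- Let G be a graph containing a path P = v_0 v_1 ⋯ v_l with deg(v_0) = 1. Let v = v_r and u = v_s with 0 ≤ r < s, r + s ≤ l − 1, and deg(v_i) = 2 for every i with 0 < i < (r+s)/2. Then |SW_k(G;v,v)| ≤ |SW_k(G;u,u)| for all k ≥ 0, with strict inequality for some k. -/
open scoped BigOperators

universe u

/-- The signless Laplacian matrix `Q = D + A` of a graph. -/
noncomputable def signLap {V : Type u} [Fintype V] (G : SimpleGraph V) :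
    Matrix V V ℝ :=
  letI := Classical.decEq V
  letI : DecidableRel G.Adj := Classical.decRel _
  Matrix.diagonal (fun i => (G.degree i : ℝ)) + G.adjMatrix ℝ

lemma signLap_isHermitian {V : Type u} [Fintype V] (G : SimpleGraph V) :
    (signLap G).IsHermitian := by
  classical
  unfold signLap
  ext i j
  simp [Matrix.conjTranspose_apply, Matrix.add_apply, Matrix.diagonal_apply,
    SimpleGraph.adjMatrix_apply, SimpleGraph.adj_comm]
  split_ifs with h h' h' <;> simp_all [SimpleGraph.adj_comm, eq_comm] <;> subst h' <;> rfl

/-- Eigenvalues of the signless Laplacian. -/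
noncomputable def signLapEig {V : Type u} [Fintype V] (G : SimpleGraph V) : V → ℝ :=
  letI := Classical.decEq V
  (signLap_isHermitian G).eigenvalues

/-- The signless Laplacian Estrada index. -/
noncomputable def SLEE {V : Type u} [Fintype V] (G : SimpleGraph V) : ℝ :=
  ∑ i, Real.exp (signLapEig G i)

/-- The `k`-th signless Laplacian spectral moment. -/
noncomputable def specMoment {V : Type u} [Fintype V] (G : SimpleGraph V) (k : ℕ) : ℝ :=
  ∑ i, (signLapEig G i) ^ k

/-- The number of semi-edge walks of length `k` in `G` from `x` to `y`. -/
noncomputable def swCount {V : Type u} (G : SimpleGraph V) (k : ℕ) (x y : V) : ℕ :=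
  Nat.card { p : (Fin (k + 1) → V) × (Fin k → Sym2 V) //
    (∀ i : Fin k, p.2 i ∈ G.edgeSet ∧ p.1 i.castSucc ∈ p.2 i ∧ p.1 i.succ ∈ p.2 i) ∧
    p.1 0 = x ∧ p.1 (Fin.last k) = y }

/-- A unicyclic graph: connected with as many edges as vertices. -/
def IsUnicyclic {V : Type u} [Fintype V] (G : SimpleGraph V) : Prop :=
  G.Connected ∧ Nat.card G.edgeSet = Fintype.card V

/-- The cycle graph on `Fin q`. -/
def cycleGraph' (q : ℕ) : SimpleGraph (Fin q) :=
  SimpleGraph.fromRel (fun i j => (i.val + 1) % q = j.val)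

/-- `C_q S(n₁,…,n_q)` : the cycle `C_q` with `n i` pendent vertices attached to vertex `i`. -/
def CqS (q : ℕ) (n : Fin q → ℕ) : SimpleGraph (Fin q ⊕ Σ i : Fin q, Fin (n i)) :=
  SimpleGraph.fromRel (fun x y =>
    (∃ i j : Fin q, x = Sum.inl i ∧ y = Sum.inl j ∧ (i.val + 1) % q = j.val) ∨
    (∃ (i : Fin q) (p : Fin (n i)), x = Sum.inl i ∧ y = Sum.inr ⟨i, p⟩))

/-- `C_q P(n₁,…,n_q)` : the cycle `C_q` with a pendent path on `n i + 1` vertices at vertex `i`. -/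
def CqP (q : ℕ) (n : Fin q → ℕ) : SimpleGraph (Fin q ⊕ Σ i : Fin q, Fin (n i)) :=
  SimpleGraph.fromRel (fun x y =>
    (∃ i j : Fin q, x = Sum.inl i ∧ y = Sum.inl j ∧ (i.val + 1) % q = j.val) ∨
    (∃ (i : Fin q) (h : 0 < n i), x = Sum.inl i ∧ y = Sum.inr ⟨i, ⟨0, h⟩⟩) ∨
    (∃ (i : Fin q) (a b : Fin (n i)), x = Sum.inr ⟨i, a⟩ ∧ y = Sum.inr ⟨i, b⟩ ∧
      a.val + 1 = b.val))

/-- `G⁽¹⁾ = C₃S(n-3,0,0)`. -/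
noncomputable def Gmax1 (m : ℕ) := CqS 3 ![m, 0, 0]

/-- `G₍₂₎`: the cycle `C_{n-1}` with one pendent vertex attached. -/
noncomputable def Gmin2 (n : ℕ) := CqP (n - 1) (fun i => if i.val = 0 then 1 else 0)

set_option linter.unusedSectionVars false

section Helpers
variable {I : Type*} [Fintype I] [DecidableEq I]

lemma sum_support_one (c t : I → ℕ) (a : I)
    (hsup : ∀ y, c y ≠ 0 → y = a) :
    ∑ y, c y * t y = c a * t a := by
  classical
  rw [← Finset.sum_subset (Finset.subset_univ {a})]
  · simp
  · intro x _ hx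
    simp only [Finset.mem_singleton] at hx
    rcases Nat.eq_zero_or_pos (c x) with h | h
    · simp [h]
    · exact absurd (hsup x (by omega)) hx

lemma sum_support_two (c t : I → ℕ) (a b : I) (hab : a ≠ b)
    (hsup : ∀ y, c y ≠ 0 → y = a ∨ y = b) :
    ∑ y, c y * t y = c a * t a + c b * t b := by
  classical
  rw [← Finset.sum_subset (Finset.subset_univ {a, b})]
  · rw [Finset.sum_insert (by simp [hab]), Finset.sum_singleton]
  · intro x _ hx
    simp only [Finset.mem_insert, Finset.mem_singleton] at hx
    push_neg at hx
    rcases Nat.eq_zero_or_pos (c x) with h | h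
    · simp [h]
    · rcases hsup x (by omega) with h' | h' <;> simp [h'] at hx

lemma sum_support_three (c t : I → ℕ) (a b d : I) (hab : a ≠ b) (had : a ≠ d) (hbd : b ≠ d)
    (hsup : ∀ y, c y ≠ 0 → y = a ∨ y = b ∨ y = d) :
    ∑ y, c y * t y = c a * t a + c b * t b + c d * t d := by
  classical
  rw [← Finset.sum_subset (Finset.subset_univ {a, b, d})]
  · rw [Finset.sum_insert (by simp [hab, had]), Finset.sum_insert (by simp [hbd]),
      Finset.sum_singleton]
    ring
  · intro x _ hx
    simp only [Finset.mem_insert, Finset.mem_singleton] at hx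
    push_neg at hx
    rcases Nat.eq_zero_or_pos (c x) with h | h
    · simp [h]
    · rcases hsup x (by omega) with h' | h' | h' <;> simp [h'] at hx

lemma le_sum_one (f : I → ℕ) (a : I) : f a ≤ ∑ y, f y :=
  Finset.single_le_sum (fun _ _ => Nat.zero_le _) (Finset.mem_univ a)

lemma le_sum_two (f : I → ℕ) (a b : I) (hab : a ≠ b) : f a + f b ≤ ∑ y, f y := by
  classical
  calc f a + f b = ∑ y ∈ ({a, b} : Finset I), f y := by
        rw [Finset.sum_insert (by simp [hab]), Finset.sum_singleton]
    _ ≤ ∑ y, f y := Finset.sum_le_sum_of_subset (Finset.subset_univ _)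

lemma le_sum_three (f : I → ℕ) (a b d : I) (hab : a ≠ b) (had : a ≠ d) (hbd : b ≠ d) :
    f a + f b + f d ≤ ∑ y, f y := by
  classical
  calc f a + f b + f d = ∑ y ∈ ({a, b, d} : Finset I), f y := by
        rw [Finset.sum_insert (by simp [hab, had]), Finset.sum_insert (by simp [hbd]),
          Finset.sum_singleton, add_assoc]
    _ ≤ ∑ y, f y := Finset.sum_le_sum_of_subset (Finset.subset_univ _)

end Helpers
section Master
variable {I : Type*} [Fintype I] [DecidableEq I]

structure MasterData (I : Type*) [Fintype I] [DecidableEq I] where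
  M : Matrix I I ℕ
  c' : ℕ
  m : ℕ
  p : ℕ → I
  hm : m = 2 * c'
  hc : 1 ≤ c'
  hsym : ∀ a b, M a b = M b a
  hinj : ∀ i, i ≤ m + 1 → ∀ j, j ≤ m + 1 → p i = p j → i = j
  h0sup : ∀ y, M (p 0) y ≠ 0 → y = p 0 ∨ y = p 1
  h0d : M (p 0) (p 0) ≤ 2
  h01 : M (p 0) (p 1) ≤ 1
  h1sup : ∀ j, 1 ≤ j → j < c' → ∀ y, M (p j) y ≠ 0 → y = p (j-1) ∨ y = p j ∨ y = p (j+1)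
  h1d : ∀ j, 1 ≤ j → j < c' → M (p j) (p j) = 2
  h1a : ∀ j, 1 ≤ j → j < c' → M (p j) (p (j-1)) = 1
  h1b : ∀ j, 1 ≤ j → j < c' → M (p j) (p (j+1)) = 1
  h2 : ∀ j, c' < j → j ≤ m → 2 ≤ M (p j) (p j)
  h3 : ∀ j, c' ≤ j → j ≤ m → 1 ≤ M (p j) (p (j+1))

namespace MasterData

variable (D : MasterData I)

/-- The domination relation between a "low" element and its reflection. -/
def Pair (z z' : I) : Prop :=
  (z = z' ∧ ∀ j, j < D.c' → z ≠ D.p j) ∨ (∃ j, j < D.c' ∧ z = D.p j ∧ z' = D.p (D.m - j))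

lemma pairP : ∀ i, i ≤ D.c' → D.Pair (D.p i) (D.p (D.m - i)) := by
  intro i hi
  rcases lt_or_eq_of_le hi with h | h
  · exact Or.inr ⟨i, h, rfl, rfl⟩
  · subst h
    have hm := D.hm
    have : D.m - D.c' = D.c' := by omega
    rw [this]
    refine Or.inl ⟨rfl, ?_⟩
    intro j hj hne
    have := D.hinj _ (by omega) _ (by omega) hne
    omega

lemma powsym (k : ℕ) (a b : I) : (D.M ^ k) a b = (D.M ^ k) b a := by
  have hM : D.M.transpose = D.M := by
    ext i j; exact D.hsym j i
  have h2 : (D.M ^ k).transpose = D.M ^ k := by rw [Matrix.transpose_pow, hM]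
  have h3 := congrFun (congrFun h2 b) a
  simpa [Matrix.transpose_apply] using h3

lemma ppow_succ (k : ℕ) (a b : I) :
    (D.M ^ (k+1)) a b = ∑ y, D.M a y * (D.M ^ k) y b := by
  rw [pow_succ', Matrix.mul_apply]

theorem main : ∀ k, ∀ z z' u u', D.Pair z z' → D.Pair u u' →
    (D.M ^ k) z u ≤ (D.M ^ k) z' u' := by
  have hm := D.hm
  have hc := D.hc
  intro k
  induction k with
  | zero =>
    intro z z' u u' hz hu
    rcases hz with ⟨rfl, hz⟩ | ⟨j, hj, rfl, rfl⟩
    · rcases hu with ⟨rfl, _⟩ | ⟨i, hi, rfl, rfl⟩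
      · exact le_refl _
      · -- z = z' not in L, u = p i, u' = p (m - i)
        have h1 : (D.M ^ 0) z (D.p i) = 0 := by
          simp only [pow_zero, Matrix.one_apply]
          rw [if_neg]; exact fun h => hz i hi h
        rw [h1]; exact Nat.zero_le _
    · rcases hu with ⟨rfl, hu⟩ | ⟨i, hi, rfl, rfl⟩
      · have h1 : (D.M ^ 0) (D.p j) u = 0 := by
          simp only [pow_zero, Matrix.one_apply]
          rw [if_neg]; exact fun h => hu j hj h.symm
        rw [h1]; exact Nat.zero_le _
      · by_cases hji : j = i
        · subst hji
          simp [pow_zero, Matrix.one_apply]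
        · have h1 : (D.M ^ 0) (D.p j) (D.p i) = 0 := by
            simp only [pow_zero, Matrix.one_apply]
            rw [if_neg]
            intro h; exact hji (D.hinj _ (by omega) _ (by omega) h)
          rw [h1]; exact Nat.zero_le _
  | succ k ih =>
    -- main case: first coordinate is a reflection pair
    have refl_case : ∀ j, j < D.c' → ∀ u u', D.Pair u u' →
        (D.M ^ (k+1)) (D.p j) u ≤ (D.M ^ (k+1)) (D.p (D.m - j)) u' := by
      intro j hj u u' hu
      have hrEq := D.ppow_succ k (D.p j) u
      have hrEq' := D.ppow_succ k (D.p (D.m - j)) u'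
      rcases Nat.eq_zero_or_pos j with rfl | hj1
      · -- j = 0
        have hne01 : D.p 0 ≠ D.p 1 := fun h => by
          have := D.hinj 0 (by omega) 1 (by omega) h; omega
        rw [hrEq, sum_support_two _ _ _ _ hne01 D.h0sup]
        have hne : D.p D.m ≠ D.p (D.m - 1) := fun h => by
          have := D.hinj D.m (by omega) (D.m - 1) (by omega) h; omega
        have hge : D.M (D.p D.m) (D.p D.m) * (D.M ^ k) (D.p D.m) u'
            + D.M (D.p D.m) (D.p (D.m - 1)) * (D.M ^ k) (D.p (D.m - 1)) u'
            ≤ ∑ y, D.M (D.p D.m) y * (D.M ^ k) y u' := by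
          exact le_sum_two (fun y => D.M (D.p D.m) y * (D.M ^ k) y u') _ _ hne
        rw [hrEq']
        refine le_trans ?_ hge
        have t1 : (D.M ^ k) (D.p 0) u ≤ (D.M ^ k) (D.p D.m) u' := by
          have := ih (D.p 0) (D.p (D.m - 0)) u u' (D.pairP 0 (by omega)) hu
          simpa using this
        have t2 : (D.M ^ k) (D.p 1) u ≤ (D.M ^ k) (D.p (D.m - 1)) u' :=
          ih _ _ u u' (D.pairP 1 (by omega)) hu
        have c1 : 2 ≤ D.M (D.p D.m) (D.p D.m) := D.h2 D.m (by omega) (le_refl _)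
        have c2 : 1 ≤ D.M (D.p D.m) (D.p (D.m - 1)) := by
          have := D.h3 (D.m - 1) (by omega) (by omega)
          have he : D.m - 1 + 1 = D.m := by omega
          rw [he] at this
          rw [D.hsym]; exact this
        exact Nat.add_le_add (Nat.mul_le_mul (le_trans D.h0d c1) t1)
          (Nat.mul_le_mul (le_trans D.h01 c2) t2)
      · -- 1 ≤ j < c'
        have hd : ∀ i₁ i₂, i₁ ≤ D.m + 1 → i₂ ≤ D.m + 1 → i₁ ≠ i₂ → D.p i₁ ≠ D.p i₂ := by
          intro i₁ i₂ h₁ h₂ hne h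
          exact hne (D.hinj _ h₁ _ h₂ h)
        rw [hrEq, sum_support_three _ _ _ _ _
          (hd (j-1) j (by omega) (by omega) (by omega))
          (hd (j-1) (j+1) (by omega) (by omega) (by omega))
          (hd j (j+1) (by omega) (by omega) (by omega))
          (D.h1sup j hj1 hj)]
        rw [hrEq']
        have hge : D.M (D.p (D.m - j)) (D.p (D.m - (j-1))) * (D.M ^ k) (D.p (D.m - (j-1))) u'
            + D.M (D.p (D.m - j)) (D.p (D.m - j)) * (D.M ^ k) (D.p (D.m - j)) u'
            + D.M (D.p (D.m - j)) (D.p (D.m - (j+1))) * (D.M ^ k) (D.p (D.m - (j+1))) u'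
            ≤ ∑ y, D.M (D.p (D.m - j)) y * (D.M ^ k) y u' := by
          refine le_sum_three (fun y => D.M (D.p (D.m - j)) y * (D.M ^ k) y u') _ _ _
            (hd (D.m - (j-1)) (D.m - j) (by omega) (by omega) (by omega))
            (hd (D.m - (j-1)) (D.m - (j+1)) (by omega) (by omega) (by omega))
            (hd (D.m - j) (D.m - (j+1)) (by omega) (by omega) (by omega))
        refine le_trans ?_ hge
        have t0 : (D.M ^ k) (D.p (j-1)) u ≤ (D.M ^ k) (D.p (D.m - (j-1))) u' :=
          ih _ _ u u' (D.pairP (j-1) (by omega)) hu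
        have t1 : (D.M ^ k) (D.p j) u ≤ (D.M ^ k) (D.p (D.m - j)) u' :=
          ih _ _ u u' (D.pairP j (by omega)) hu
        have t2 : (D.M ^ k) (D.p (j+1)) u ≤ (D.M ^ k) (D.p (D.m - (j+1))) u' :=
          ih _ _ u u' (D.pairP (j+1) (by omega)) hu
        have c0 : 1 ≤ D.M (D.p (D.m - j)) (D.p (D.m - (j-1))) := by
          have := D.h3 (D.m - j) (by omega) (by omega)
          have he : D.m - j + 1 = D.m - (j - 1) := by omega
          rwa [he] at this
        have c1 : 2 ≤ D.M (D.p (D.m - j)) (D.p (D.m - j)) := D.h2 _ (by omega) (by omega)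
        have c2 : 1 ≤ D.M (D.p (D.m - j)) (D.p (D.m - (j+1))) := by
          have := D.h3 (D.m - (j+1)) (by omega) (by omega)
          have he : D.m - (j+1) + 1 = D.m - j := by omega
          rw [he] at this
          rw [D.hsym]; exact this
        have e1 : D.M (D.p j) (D.p (j-1)) = 1 := D.h1a j hj1 hj
        have e2 : D.M (D.p j) (D.p j) = 2 := D.h1d j hj1 hj
        have e3 : D.M (D.p j) (D.p (j+1)) = 1 := D.h1b j hj1 hj
        rw [e1, e2, e3]
        exact Nat.add_le_add (Nat.add_le_add (Nat.mul_le_mul c0 t0)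
          (Nat.mul_le_mul c1 t1)) (Nat.mul_le_mul c2 t2)
    intro z z' u u' hz hu
    rcases hz with ⟨rfl, hz⟩ | ⟨j, hj, rfl, rfl⟩
    · rcases hu with ⟨rfl, _⟩ | ⟨i, hi, rfl, rfl⟩
      · exact le_refl _
      · rw [D.powsym (k+1) z (D.p i), D.powsym (k+1) z (D.p (D.m - i))]
        exact refl_case i hi z z (Or.inl ⟨rfl, hz⟩)
    · exact refl_case j hj u u' hu


/-- Strict domination statement. -/
def Str (k j i : ℕ) : Prop :=
  (D.M ^ k) (D.p j) (D.p i) < (D.M ^ k) (D.p (D.m - j)) (D.p (D.m - i))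

lemma sq_apply (a b : I) : (D.M ^ 2) a b = ∑ y, D.M a y * D.M y b := by
  rw [D.ppow_succ 1]
  simp [pow_one]

lemma strBase : D.Str 2 0 0 := by
  have hm := D.hm
  have hc := D.hc
  have hd : ∀ i₁ i₂, i₁ ≤ D.m + 1 → i₂ ≤ D.m + 1 → i₁ ≠ i₂ → D.p i₁ ≠ D.p i₂ := by
    intro i₁ i₂ h₁ h₂ hne h
    exact hne (D.hinj _ h₁ _ h₂ h)
  unfold Str
  rw [D.sq_apply, D.sq_apply]
  rw [sum_support_two _ _ _ _ (hd 0 1 (by omega) (by omega) (by omega)) D.h0sup]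
  have hub : D.M (D.p 0) (D.p 0) * D.M (D.p 0) (D.p 0)
      + D.M (D.p 0) (D.p 1) * D.M (D.p 1) (D.p 0) ≤ 5 := by
    have h1 := D.h0d
    have h2 := D.h01
    have h3 : D.M (D.p 1) (D.p 0) ≤ 1 := by rw [D.hsym]; exact h2
    nlinarith
  have hm0 : D.m - 0 = D.m := by omega
  rw [hm0]
  have hlb : 6 ≤ ∑ y, D.M (D.p D.m) y * D.M y (D.p D.m) := by
    have hge := le_sum_three (fun y => D.M (D.p D.m) y * D.M y (D.p D.m))
      (D.p D.m) (D.p (D.m - 1)) (D.p (D.m + 1))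
      (hd D.m (D.m - 1) (by omega) (by omega) (by omega))
      (hd D.m (D.m + 1) (by omega) (by omega) (by omega))
      (hd (D.m - 1) (D.m + 1) (by omega) (by omega) (by omega))
    refine le_trans ?_ hge
    have c1 : 2 ≤ D.M (D.p D.m) (D.p D.m) := D.h2 D.m (by omega) (by omega)
    have c2 : 1 ≤ D.M (D.p D.m) (D.p (D.m - 1)) := by
      have := D.h3 (D.m - 1) (by omega) (by omega)
      have he : D.m - 1 + 1 = D.m := by omega
      rw [he] at this
      rw [D.hsym]; exact this
    have c2' : 1 ≤ D.M (D.p (D.m - 1)) (D.p D.m) := by rwa [D.hsym] at c2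
    have c3 : 1 ≤ D.M (D.p D.m) (D.p (D.m + 1)) := D.h3 D.m (by omega) (by omega)
    have c3' : 1 ≤ D.M (D.p (D.m + 1)) (D.p D.m) := by rwa [D.hsym] at c3
    nlinarith
  omega

lemma strStep : ∀ k j i, j + 1 < D.c' → i < D.c' → D.Str k j i → D.Str (k+1) (j+1) i := by
  intro k j i hj hi hstr
  have hm := D.hm
  have hc := D.hc
  have hd : ∀ i₁ i₂, i₁ ≤ D.m + 1 → i₂ ≤ D.m + 1 → i₁ ≠ i₂ → D.p i₁ ≠ D.p i₂ := by
    intro i₁ i₂ h₁ h₂ hne h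
    exact hne (D.hinj _ h₁ _ h₂ h)
  unfold Str
  rw [D.ppow_succ, D.ppow_succ]
  have hsupp := D.h1sup (j+1) (by omega) hj
  simp only [Nat.add_sub_cancel] at hsupp
  rw [sum_support_three _ _ _ _ _
    (hd j (j+1) (by omega) (by omega) (by omega))
    (hd j (j+2) (by omega) (by omega) (by omega))
    (hd (j+1) (j+2) (by omega) (by omega) (by omega)) hsupp]
  have e1 : D.M (D.p (j+1)) (D.p j) = 1 := by
    have := D.h1a (j+1) (by omega) hj
    simpa using this
  have e2 : D.M (D.p (j+1)) (D.p (j+1)) = 2 := D.h1d (j+1) (by omega) hj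
  have e3 : D.M (D.p (j+1)) (D.p (j+2)) = 1 := by
    have := D.h1b (j+1) (by omega) hj
    simpa using this
  rw [e1, e2, e3]
  -- lower bound for RHS
  have hge := le_sum_three (fun y => D.M (D.p (D.m - (j+1))) y * (D.M ^ k) y (D.p (D.m - i)))
    (D.p (D.m - j)) (D.p (D.m - (j+1))) (D.p (D.m - (j+2)))
    (hd (D.m - j) (D.m - (j+1)) (by omega) (by omega) (by omega))
    (hd (D.m - j) (D.m - (j+2)) (by omega) (by omega) (by omega))
    (hd (D.m - (j+1)) (D.m - (j+2)) (by omega) (by omega) (by omega))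
  refine lt_of_lt_of_le ?_ hge
  have c0 : 1 ≤ D.M (D.p (D.m - (j+1))) (D.p (D.m - j)) := by
    have := D.h3 (D.m - (j+1)) (by omega) (by omega)
    have he : D.m - (j+1) + 1 = D.m - j := by omega
    rwa [he] at this
  have c1 : 2 ≤ D.M (D.p (D.m - (j+1))) (D.p (D.m - (j+1))) := D.h2 _ (by omega) (by omega)
  have c2 : 1 ≤ D.M (D.p (D.m - (j+1))) (D.p (D.m - (j+2))) := by
    have := D.h3 (D.m - (j+2)) (by omega) (by omega)
    have he : D.m - (j+2) + 1 = D.m - (j+1) := by omega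
    rw [he] at this
    rw [D.hsym]; exact this
  have t0 : (D.M ^ k) (D.p j) (D.p i) < (D.M ^ k) (D.p (D.m - j)) (D.p (D.m - i)) := hstr
  have t1 : (D.M ^ k) (D.p (j+1)) (D.p i) ≤ (D.M ^ k) (D.p (D.m - (j+1))) (D.p (D.m - i)) :=
    D.main k _ _ _ _ (D.pairP (j+1) (by omega)) (D.pairP i (by omega))
  have t2 : (D.M ^ k) (D.p (j+2)) (D.p i) ≤ (D.M ^ k) (D.p (D.m - (j+2))) (D.p (D.m - i)) :=
    D.main k _ _ _ _ (D.pairP (j+2) (by omega)) (D.pairP i (by omega))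
  have r0 : (D.M ^ k) (D.p (D.m - j)) (D.p (D.m - i))
      ≤ D.M (D.p (D.m - (j+1))) (D.p (D.m - j)) * (D.M ^ k) (D.p (D.m - j)) (D.p (D.m - i)) :=
    Nat.le_mul_of_pos_left _ (by omega)
  have r1 : 2 * (D.M ^ k) (D.p (D.m - (j+1))) (D.p (D.m - i))
      ≤ D.M (D.p (D.m - (j+1))) (D.p (D.m - (j+1)))
        * (D.M ^ k) (D.p (D.m - (j+1))) (D.p (D.m - i)) :=
    Nat.mul_le_mul_right _ c1
  have r2 : (D.M ^ k) (D.p (D.m - (j+2))) (D.p (D.m - i))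
      ≤ D.M (D.p (D.m - (j+1))) (D.p (D.m - (j+2)))
        * (D.M ^ k) (D.p (D.m - (j+2))) (D.p (D.m - i)) :=
    Nat.le_mul_of_pos_left _ (by omega)
  omega

lemma strSymm : ∀ k j i, D.Str k j i → D.Str k i j := by
  intro k j i h
  unfold Str at *
  rwa [D.powsym k (D.p i) (D.p j), D.powsym k (D.p (D.m - i)) (D.p (D.m - j))]

lemma strStep2 : ∀ k j i, i + 1 < D.c' → j < D.c' → D.Str k j i → D.Str (k+1) j (i+1) := by
  intro k j i hi hj h
  exact D.strSymm _ _ _ (D.strStep k i j hi hj (D.strSymm _ _ _ h))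

lemma strFirst : ∀ j, j < D.c' → D.Str (2 + j) j 0 := by
  intro j
  induction j with
  | zero => intro _; exact D.strBase
  | succ j ihj =>
    intro hj
    exact D.strStep (2 + j) j 0 hj (by omega) (ihj (by omega))

lemma strDiag : ∀ i j, i ≤ j → j < D.c' → D.Str (2 + j + i) j i := by
  intro i
  induction i with
  | zero =>
    intro j _ hj
    exact D.strFirst j hj
  | succ i ihi =>
    intro j hij hj
    exact D.strStep2 (2 + j + i) j i (by omega) hj (ihi j (by omega) hj)

end MasterData
end Master
section GraphMatrices
open SimpleGraph
variable {V : Type u} [Fintype V] [DecidableEq V] (G : SimpleGraph V) [DecidableRel G.Adj]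

/-- The signless Laplacian over ℕ. -/
def Qn : Matrix V V ℕ := fun a b =>
  (if a = b then G.degree a else 0) + (if G.Adj a b then 1 else 0)

lemma Qn_symm (a b : V) : Qn G a b = Qn G b a := by
  unfold Qn
  by_cases h : a = b
  · subst h; rfl
  · simp [h, Ne.symm h, G.adj_comm]

lemma sym2_eq_of_mem {x z : V} {e : Sym2 V} (hx : x ∈ e) (hz : z ∈ e) (hne : x ≠ z) :
    e = s(x, z) :=
  ((Sym2.mem_and_mem_iff hne).mp ⟨hx, hz⟩)

lemma card_filter_edges (x z : V) :
    (Finset.univ.filter (fun e : Sym2 V => e ∈ G.edgeSet ∧ x ∈ e ∧ z ∈ e)).card = Qn G x z := by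
  by_cases h : x = z
  · subst h
    have : (Finset.univ.filter (fun e : Sym2 V => e ∈ G.edgeSet ∧ x ∈ e ∧ x ∈ e))
        = G.incidenceFinset x := by
      ext e
      simp [SimpleGraph.mem_incidenceFinset, SimpleGraph.incidenceSet, and_assoc]
    rw [this, SimpleGraph.card_incidenceFinset_eq_degree]
    simp [Qn]
  · by_cases hadj : G.Adj x z
    · have : (Finset.univ.filter (fun e : Sym2 V => e ∈ G.edgeSet ∧ x ∈ e ∧ z ∈ e))
          = {s(x, z)} := by
        ext e
        simp only [Finset.mem_filter, Finset.mem_univ, true_and, Finset.mem_singleton]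
        constructor
        · rintro ⟨he, hx, hz⟩
          exact sym2_eq_of_mem hx hz h
        · rintro rfl
          exact ⟨hadj, Sym2.mem_mk_left _ _, Sym2.mem_mk_right _ _⟩
      rw [this]
      simp [Qn, h, hadj]
    · have : (Finset.univ.filter (fun e : Sym2 V => e ∈ G.edgeSet ∧ x ∈ e ∧ z ∈ e))
          = ∅ := by
        ext e
        simp only [Finset.mem_filter, Finset.mem_univ, true_and, Finset.notMem_empty,
          iff_false, not_and]
        intro he hx hz
        rw [sym2_eq_of_mem hx hz h] at he
        exact hadj he
      rw [this]
      simp [Qn, h, hadj]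

lemma card_stepEdge (x z : V) :
    Nat.card {e : Sym2 V // e ∈ G.edgeSet ∧ x ∈ e ∧ z ∈ e} = Qn G x z := by
  rw [Nat.card_eq_fintype_card, Fintype.card_subtype, card_filter_edges]

/-- The type of semi-edge walks. -/
def WT (k : ℕ) (x y : V) :=
  { p : (Fin (k + 1) → V) × (Fin k → Sym2 V) //
    (∀ i : Fin k, p.2 i ∈ G.edgeSet ∧ p.1 i.castSucc ∈ p.2 i ∧ p.1 i.succ ∈ p.2 i) ∧
    p.1 0 = x ∧ p.1 (Fin.last k) = y }

lemma swCount_def (k : ℕ) (x y : V) : swCount G k x y = Nat.card (WT G k x y) := rfl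

instance (k : ℕ) (x y : V) : Finite (WT G k x y) := by
  unfold WT; infer_instance

lemma swCount_zero (x y : V) : swCount G 0 x y = if x = y then 1 else 0 := by
  rw [swCount_def]
  by_cases h : x = y
  · subst h
    rw [if_pos rfl]
    have huniq : ∀ t : WT G 0 x x, t = ⟨(fun _ => x, fun i => i.elim0),
        fun i => i.elim0, rfl, rfl⟩ := by
      rintro ⟨⟨f, g⟩, hw, h0, hl⟩
      have hf : f = fun _ => x := by
        funext i
        have hi : i = 0 := by
          apply Fin.ext
          omega
        rw [hi]
        exact h0
      have hg : g = fun i => i.elim0 := by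
        funext i
        exact i.elim0
      subst hf; subst hg; rfl
    rw [Nat.card_eq_one_iff_unique]
    constructor
    · constructor
      intro a b
      rw [huniq a, huniq b]
    · exact ⟨⟨(fun _ => x, fun i => i.elim0), fun i => i.elim0, rfl, rfl⟩⟩
  · rw [if_neg h]
    have : IsEmpty (WT G 0 x y) := by
      constructor
      rintro ⟨⟨f, g⟩, hw, h0, hl⟩
      apply h
      rw [← h0, ← hl]
      rfl
    exact Nat.card_of_isEmpty

lemma fin_one_eq_succ_zero {k : ℕ} : (1 : Fin (k+2)) = (0 : Fin (k+1)).succ :=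
  (Fin.succ_zero_eq_one).symm

/-- Forward map: peel off the first step. -/
def fwdStep (k : ℕ) (x y z : V) :
    {t : WT G (k+1) x y // t.1.1 1 = z} →
      ({e : Sym2 V // e ∈ G.edgeSet ∧ x ∈ e ∧ z ∈ e} × WT G k z y)
  | ⟨⟨⟨f, g⟩, hp⟩, hz⟩ =>
    (⟨g 0, by
        have h := (hp.1 0).1
        exact h,
      by
        have hmem := (hp.1 0).2.1
        have h0 : f 0 = x := hp.2.1
        dsimp only at hmem
        rw [Fin.castSucc_zero, h0] at hmem
        exact hmem,
      by
        have hmem := (hp.1 0).2.2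
        have hz' : f 1 = z := hz
        dsimp only at hmem
        have hz'' : f ((0 : Fin (k+1)).succ) = z := by
          rw [Fin.succ_zero_eq_one]
          exact hz'
        rw [hz''] at hmem
        exact hmem⟩,
     ⟨(Fin.tail f, Fin.tail g), by
        dsimp only
        refine ⟨fun i => ?_, ?_, ?_⟩
        · have hww := hp.1 i.succ
          dsimp only at hww
          refine ⟨hww.1, ?_, hww.2.2⟩
          have hmem := hww.2.1
          rw [← Fin.succ_castSucc] at hmem
          exact hmem
        · show f ((0 : Fin (k+1)).succ) = z
          rw [Fin.succ_zero_eq_one]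
          exact hz
        · show f ((Fin.last k).succ) = y
          rw [Fin.succ_last]
          exact hp.2.2⟩)

/-- Backward map: glue a first step. -/
def bwdStep (k : ℕ) (x y z : V) :
    ({e : Sym2 V // e ∈ G.edgeSet ∧ x ∈ e ∧ z ∈ e} × WT G k z y) →
      {t : WT G (k+1) x y // t.1.1 1 = z}
  | (⟨e, hpe⟩, ⟨⟨f', g'⟩, hq⟩) =>
    ⟨⟨(Fin.cons x f', Fin.cons e g'), by
        have hw' := hq.1
        have h0' : f' 0 = z := hq.2.1
        have hl' : f' (Fin.last k) = y := hq.2.2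
        dsimp only at hw' ⊢
        refine ⟨?_, by rw [Fin.cons_zero], ?_⟩
        · intro i
          induction i using Fin.cases with
          | zero =>
            refine ⟨by rw [Fin.cons_zero]; exact hpe.1, ?_, ?_⟩
            · rw [Fin.cons_zero, Fin.castSucc_zero, Fin.cons_zero]
              exact hpe.2.1
            · rw [Fin.cons_zero, Fin.succ_zero_eq_one, fin_one_eq_succ_zero, Fin.cons_succ,
                h0']
              exact hpe.2.2
          | succ j =>
            refine ⟨by rw [Fin.cons_succ]; exact (hw' j).1, ?_, ?_⟩
            · rw [Fin.cons_succ, ← Fin.succ_castSucc, Fin.cons_succ]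
              exact (hw' j).2.1
            · rw [Fin.cons_succ, Fin.cons_succ]
              exact (hw' j).2.2
        · rw [← Fin.succ_last, Fin.cons_succ]
          exact hl'⟩,
      by
        show (Fin.cons x f' : Fin (k+2) → V) 1 = z
        rw [fin_one_eq_succ_zero, Fin.cons_succ]
        exact hq.2.1⟩

/-- Peeling off the first step of a semi-edge walk. -/
def stepEquiv (k : ℕ) (x y z : V) :
    {t : WT G (k+1) x y // t.1.1 1 = z} ≃
      ({e : Sym2 V // e ∈ G.edgeSet ∧ x ∈ e ∧ z ∈ e} × WT G k z y) where
  toFun := fwdStep G k x y z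
  invFun := bwdStep G k x y z
  left_inv := by
    rintro ⟨⟨⟨f, g⟩, hp⟩, hz⟩
    simp only [fwdStep, bwdStep]
    apply Subtype.ext
    apply Subtype.ext
    show ((Fin.cons x (Fin.tail f), Fin.cons (g 0) (Fin.tail g)) :
      (Fin (k+2) → V) × (Fin (k+1) → Sym2 V)) = (f, g)
    have h0 : f 0 = x := hp.2.1
    rw [Prod.mk.injEq]
    constructor
    · rw [← h0]
      exact Fin.cons_self_tail f
    · exact Fin.cons_self_tail g
  right_inv := by
    rintro ⟨⟨e, hpe⟩, ⟨⟨f', g'⟩, hq⟩⟩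
    simp only [fwdStep, bwdStep]
    refine Prod.ext ?_ ?_
    · apply Subtype.ext
      dsimp only
      rw [Fin.cons_zero]
    · apply Subtype.ext
      dsimp only
      rw [Prod.mk.injEq]
      exact ⟨Fin.tail_cons _ _, Fin.tail_cons _ _⟩

lemma nat_card_sigma {ι : Type*} [Fintype ι] (F : ι → Type*) [∀ i, Finite (F i)] :
    Nat.card (Σ i, F i) = ∑ i, Nat.card (F i) := by
  letI : ∀ i, Fintype (F i) := fun i => Fintype.ofFinite _
  rw [Nat.card_eq_fintype_card, Fintype.card_sigma]
  exact Finset.sum_congr rfl fun i _ => (Nat.card_eq_fintype_card).symm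

lemma swCount_succ (k : ℕ) (x y : V) :
    swCount G (k+1) x y = ∑ z, Qn G x z * swCount G k z y := by
  rw [swCount_def]
  have e1 : WT G (k+1) x y ≃ Σ z : V, {t : WT G (k+1) x y // t.1.1 1 = z} :=
    (Equiv.sigmaFiberEquiv fun t : WT G (k+1) x y => t.1.1 1).symm
  rw [Nat.card_congr e1, nat_card_sigma]
  refine Finset.sum_congr rfl fun z _ => ?_
  rw [Nat.card_congr (stepEquiv G k x y z), Nat.card_prod, card_stepEdge, swCount_def]

lemma swCount_eq_pow (k : ℕ) (x y : V) : swCount G k x y = (Qn G ^ k) x y := by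
  induction k generalizing x with
  | zero => rw [swCount_zero]; simp [Matrix.one_apply]
  | succ k ih =>
    rw [swCount_succ, pow_succ', Matrix.mul_apply]
    exact Finset.sum_congr rfl fun z _ => by rw [ih]

end GraphMatrices
section EdgeMatrices
open Matrix
open SimpleGraph
variable {V : Type u} [Fintype V] [DecidableEq V] (G : SimpleGraph V) [DecidableRel G.Adj]

/-- Vertex-edge incidence matrix over ℕ. -/
def Ninc : Matrix V (Sym2 V) ℕ := fun a e => if e ∈ G.edgeSet ∧ a ∈ e then 1 else 0

/-- The edge analogue of the signless Laplacian. -/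
def MQ : Matrix (Sym2 V) (Sym2 V) ℕ := (Ninc G)ᵀ * Ninc G

lemma NNT : Ninc G * (Ninc G)ᵀ = Qn G := by
  ext a b
  rw [Matrix.mul_apply]
  have hterm : ∀ e : Sym2 V, Ninc G a e * (Ninc G)ᵀ e b
      = if e ∈ G.edgeSet ∧ a ∈ e ∧ b ∈ e then 1 else 0 := by
    intro e
    rw [Matrix.transpose_apply]
    unfold Ninc
    by_cases h1 : e ∈ G.edgeSet
    · by_cases h2 : a ∈ e
      · by_cases h3 : b ∈ e <;> simp [h1, h2, h3]
      · simp [h1, h2]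
    · simp [h1]
  rw [Finset.sum_congr rfl fun e _ => hterm e, ← card_filter_edges G a b,
    Finset.card_filter]

lemma MQ_apply (e f : Sym2 V) : MQ G e f = ∑ v, Ninc G v e * Ninc G v f := by
  rw [MQ, Matrix.mul_apply]
  exact Finset.sum_congr rfl fun v _ => by rw [Matrix.transpose_apply]

lemma MQ_symm (e f : Sym2 V) : MQ G e f = MQ G f e := by
  rw [MQ_apply, MQ_apply]
  exact Finset.sum_congr rfl fun v _ => mul_comm _ _

lemma bridgePow : ∀ k, Qn G ^ (k+1) = Ninc G * (MQ G ^ k) * (Ninc G)ᵀ := by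
  intro k
  induction k with
  | zero => rw [pow_zero, pow_one, Matrix.mul_one, NNT]
  | succ k ih =>
    rw [pow_succ, ih, pow_succ, MQ]
    rw [← NNT]
    simp only [Matrix.mul_assoc]
  
lemma NBN_apply (B : Matrix (Sym2 V) (Sym2 V) ℕ) (v : V) :
    (Ninc G * B * (Ninc G)ᵀ) v v = ∑ f, (∑ e, Ninc G v e * B e f) * Ninc G v f := by
  rw [Matrix.mul_apply]
  refine Finset.sum_congr rfl fun f _ => ?_
  rw [Matrix.mul_apply, Matrix.transpose_apply]

/-- value of the incidence matrix on an actual incidence -/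
lemma Ninc_one {v : V} {e : Sym2 V} (he : e ∈ G.edgeSet) (hv : v ∈ e) : Ninc G v e = 1 := by
  simp [Ninc, he, hv]

lemma Ninc_ne_zero {v : V} {e : Sym2 V} (h : Ninc G v e ≠ 0) : e ∈ G.edgeSet ∧ v ∈ e := by
  by_contra hc
  rw [Ninc, if_neg hc] at h
  exact h rfl

end EdgeMatrices

section GraphStructure
open SimpleGraph
variable {V : Type u} [Fintype V] [DecidableEq V] {G : SimpleGraph V} [DecidableRel G.Adj]

lemma two_le_degree {v a b : V} (ha : G.Adj v a) (hb : G.Adj v b) (hab : a ≠ b) :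
    2 ≤ G.degree v := by
  have hsub : ({a, b} : Finset V) ⊆ G.neighborFinset v := by
    intro c hc
    simp only [Finset.mem_insert, Finset.mem_singleton] at hc
    rcases hc with rfl | rfl <;> simp [SimpleGraph.mem_neighborFinset, ha, hb]
  have hcard : ({a, b} : Finset V).card = 2 := by
    rw [Finset.card_insert_of_notMem (by simp [hab]), Finset.card_singleton]
  rw [← SimpleGraph.card_neighborFinset_eq_degree, ← hcard]
  exact Finset.card_le_card hsub

lemma deg2_adj {v a b c : V} (hdeg : G.degree v = 2) (ha : G.Adj v a) (hb : G.Adj v b)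
    (hab : a ≠ b) (hc : G.Adj v c) : c = a ∨ c = b := by
  have hsub : ({a, b} : Finset V) ⊆ G.neighborFinset v := by
    intro d hd
    simp only [Finset.mem_insert, Finset.mem_singleton] at hd
    rcases hd with rfl | rfl <;> simp [SimpleGraph.mem_neighborFinset, ha, hb]
  have hcard : ({a, b} : Finset V).card = 2 := by
    rw [Finset.card_insert_of_notMem (by simp [hab]), Finset.card_singleton]
  have heq : ({a, b} : Finset V) = G.neighborFinset v := by
    apply Finset.eq_of_subset_of_card_le hsub
    rw [SimpleGraph.card_neighborFinset_eq_degree, hdeg, hcard]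
  have : c ∈ ({a, b} : Finset V) := by
    rw [heq]
    simpa [SimpleGraph.mem_neighborFinset] using hc
  simpa using this

lemma deg1_adj {v a c : V} (hdeg : G.degree v = 1) (ha : G.Adj v a) (hc : G.Adj v c) :
    c = a := by
  have hsub : ({a} : Finset V) ⊆ G.neighborFinset v := by
    intro d hd
    simp only [Finset.mem_singleton] at hd
    subst hd
    simp [SimpleGraph.mem_neighborFinset, ha]
  have heq : ({a} : Finset V) = G.neighborFinset v := by
    apply Finset.eq_of_subset_of_card_le hsub
    rw [SimpleGraph.card_neighborFinset_eq_degree, hdeg, Finset.card_singleton]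
  have : c ∈ ({a} : Finset V) := by
    rw [heq]
    simpa [SimpleGraph.mem_neighborFinset] using hc
  simpa using this

lemma edge_mem_decomp {e : Sym2 V} (he : e ∈ G.edgeSet) {v : V} (hv : v ∈ e) :
    ∃ u, G.Adj v u ∧ e = s(v, u) := by
  obtain ⟨u, rfl⟩ := Sym2.mem_iff_exists.mp hv
  exact ⟨u, (SimpleGraph.mem_edgeSet G).mp he, rfl⟩

lemma Qn_self (v : V) : Qn G v v = G.degree v := by
  simp [Qn]

lemma Qn_adj {a b : V} (h : G.Adj a b) : Qn G a b = 1 := by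
  simp [Qn, h, h.ne]

lemma Qn_support {a y : V} (h : Qn G a y ≠ 0) : a = y ∨ G.Adj a y := by
  by_contra hc
  push_neg at hc
  rw [Qn, if_neg hc.1, if_neg hc.2] at h
  exact h rfl

/-- walks on paths: injectivity of getVert for paths -/
lemma getVert_inj {a b : V} (q : G.Walk a b) (hq : q.IsPath) :
    ∀ i, i ≤ q.length → ∀ j, j ≤ q.length → q.getVert i = q.getVert j → i = j := by
  induction q with
  | nil =>
    intro i hi j hj _
    simp only [SimpleGraph.Walk.length_nil] at hi hj
    omega
  | @cons u v b hadj q ih =>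
    rw [SimpleGraph.Walk.cons_isPath_iff] at hq
    intro i hi j hj hij
    rw [SimpleGraph.Walk.length_cons] at hi hj
    match i, j with
    | 0, 0 => rfl
    | 0, (j+1) =>
      exfalso
      apply hq.2
      rw [SimpleGraph.Walk.mem_support_iff_exists_getVert]
      refine ⟨j, ?_, by omega⟩
      have : (q.cons hadj).getVert 0 = u := SimpleGraph.Walk.getVert_zero _
      rw [SimpleGraph.Walk.getVert_cons_succ] at hij
      rw [← hij, this]
    | (i+1), 0 =>
      exfalso
      apply hq.2
      rw [SimpleGraph.Walk.mem_support_iff_exists_getVert]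
      refine ⟨i, ?_, by omega⟩
      have : (q.cons hadj).getVert 0 = u := SimpleGraph.Walk.getVert_zero _
      rw [SimpleGraph.Walk.getVert_cons_succ] at hij
      rw [hij, this]
    | (i+1), (j+1) =>
      rw [SimpleGraph.Walk.getVert_cons_succ, SimpleGraph.Walk.getVert_cons_succ] at hij
      have := ih hq.1 i (by omega) j (by omega) hij
      omega

end GraphStructure
section EvenCase
open SimpleGraph
variable {V : Type u} [Fintype V] [DecidableEq V] (G : SimpleGraph V) [DecidableRel G.Adj]

lemma even_case (w : ℕ → V) (h l : ℕ) (hll : h + 1 ≤ l)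
    (winj : ∀ i, i ≤ l → ∀ j, j ≤ l → w i = w j → i = j)
    (wadj : ∀ i, i < l → G.Adj (w i) (w (i+1)))
    (hdeg0 : G.degree (w 0) = 1)
    (hdeg : ∀ i, 0 < i → 2*i < h → G.degree (w i) = 2)
    (r s : ℕ) (hrs : r < s) (hh : r + s = h) (heven : h % 2 = 0) :
    (∀ k, (Qn G ^ k) (w r) (w r) ≤ (Qn G ^ k) (w s) (w s)) ∧
    (∃ k, (Qn G ^ k) (w r) (w r) < (Qn G ^ k) (w s) (w s)) := by
  have hh2 : 2 ≤ h := by omega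
  set c' : ℕ := h / 2 with hc'
  have hc : 1 ≤ c' := by omega
  have hm : h = 2 * c' := by omega
  -- adjacency including symm and general index forms
  have wadj' : ∀ i j, j = i + 1 → i < l → G.Adj (w i) (w j) := by
    rintro i j rfl hi; exact wadj i hi
  have wadjS : ∀ i j, i = j + 1 → j < l → G.Adj (w i) (w j) := by
    rintro i j rfl hj; exact (wadj j hj).symm
  have p_inj : ∀ i, i ≤ h + 1 → ∀ j, j ≤ h + 1 → w i = w j → i = j := by
    intro i hi j hj hij
    exact winj i (by omega) j (by omega) hij
  have p_h0sup : ∀ yv, Qn G (w 0) yv ≠ 0 → yv = w 0 ∨ yv = w 1 := by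
    intro yv hy
    rcases Qn_support hy with h1 | h1
    · exact Or.inl h1.symm
    · exact Or.inr (deg1_adj hdeg0 (wadj 0 (by omega)) h1)
  have p_h0d : Qn G (w 0) (w 0) ≤ 2 := by rw [Qn_self, hdeg0]; omega
  have p_h01 : Qn G (w 0) (w 1) ≤ 1 := by rw [Qn_adj (wadj 0 (by omega))]
  have p_h1sup : ∀ j, 1 ≤ j → j < c' → ∀ yv, Qn G (w j) yv ≠ 0 →
      yv = w (j-1) ∨ yv = w j ∨ yv = w (j+1) := by
    intro j hj1 hjc yv hy
    have hdj : G.degree (w j) = 2 := hdeg j (by omega) (by omega)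
    have hadja : G.Adj (w j) (w (j-1)) := wadjS j (j-1) (by omega) (by omega)
    have hadjb : G.Adj (w j) (w (j+1)) := wadj j (by omega)
    have hne : w (j-1) ≠ w (j+1) := fun hcon => by
      have := winj (j-1) (by omega) (j+1) (by omega) hcon; omega
    rcases Qn_support hy with h1 | h1
    · exact Or.inr (Or.inl h1.symm)
    · rcases deg2_adj hdj hadja hadjb hne h1 with h2 | h2
      · exact Or.inl h2
      · exact Or.inr (Or.inr h2)
  have p_h1d : ∀ j, 1 ≤ j → j < c' → Qn G (w j) (w j) = 2 := by
    intro j hj1 hjc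
    rw [Qn_self]
    exact hdeg j (by omega) (by omega)
  have p_h1a : ∀ j, 1 ≤ j → j < c' → Qn G (w j) (w (j-1)) = 1 := by
    intro j hj1 hjc
    exact Qn_adj (wadjS j (j-1) (by omega) (by omega))
  have p_h1b : ∀ j, 1 ≤ j → j < c' → Qn G (w j) (w (j+1)) = 1 := by
    intro j hj1 hjc
    exact Qn_adj (wadj j (by omega))
  have p_h2 : ∀ j, c' < j → j ≤ h → 2 ≤ Qn G (w j) (w j) := by
    intro j hj1 hj2
    rw [Qn_self]
    refine two_le_degree (wadjS j (j-1) (by omega) (by omega)) (wadj j (by omega)) ?_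
    intro hcon
    have := winj (j-1) (by omega) (j+1) (by omega) hcon; omega
  have p_h3 : ∀ j, c' ≤ j → j ≤ h → 1 ≤ Qn G (w j) (w (j+1)) := by
    intro j hj1 hj2
    rw [Qn_adj (wadj j (by omega))]
  let hD : MasterData V := ⟨Qn G, c', h, w, hm, hc, Qn_symm G, p_inj, p_h0sup, p_h0d,
    p_h01, p_h1sup, p_h1d, p_h1a, p_h1b, p_h2, p_h3⟩
  -- now extract
  have hDM : hD.M = Qn G := rfl
  have hDp : hD.p = w := rfl
  have hDm : hD.m = h := rfl
  have hrc : r < c' := by omega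
  have hpair : hD.Pair (w r) (w s) := by
    have := hD.pairP r (by rw [show hD.c' = c' from rfl]; omega)
    rw [hDp, hDm] at this
    rw [show h - r = s by omega] at this
    exact this
  constructor
  · intro k
    have := hD.main k (w r) (w s) (w r) (w s) hpair hpair
    rwa [hDM] at this
  · refine ⟨2 + r + r, ?_⟩
    have := hD.strDiag r r le_rfl (by rw [show hD.c' = c' from rfl]; omega)
    rw [MasterData.Str, hDM, hDp, hDm, show h - r = s by omega] at this
    exact this

end EvenCase
section OddCase
open SimpleGraph
variable {V : Type u} [Fintype V] [DecidableEq V] (G : SimpleGraph V) [DecidableRel G.Adj]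

lemma MQ_ne_zero {e f : Sym2 V} (hne : MQ G e f ≠ 0) :
    ∃ v, (e ∈ G.edgeSet ∧ v ∈ e) ∧ (f ∈ G.edgeSet ∧ v ∈ f) := by
  rw [MQ_apply] at hne
  obtain ⟨v, _, hv⟩ := Finset.exists_ne_zero_of_sum_ne_zero hne
  rw [Nat.mul_ne_zero_iff] at hv
  exact ⟨v, Ninc_ne_zero G hv.1, Ninc_ne_zero G hv.2⟩

lemma odd_case (w : ℕ → V) (h l : ℕ) (hll : h + 1 ≤ l)
    (winj : ∀ i, i ≤ l → ∀ j, j ≤ l → w i = w j → i = j)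
    (wadj : ∀ i, i < l → G.Adj (w i) (w (i+1)))
    (hdeg0 : G.degree (w 0) = 1)
    (hdeg : ∀ i, 0 < i → 2*i < h → G.degree (w i) = 2)
    (r s : ℕ) (hrs : r < s) (hh : r + s = h) (hodd : h % 2 = 1) (h3le : 3 ≤ h) :
    (∀ k, (Qn G ^ k) (w r) (w r) ≤ (Qn G ^ k) (w s) (w s)) ∧
    (∃ k, (Qn G ^ k) (w r) (w r) < (Qn G ^ k) (w s) (w s)) := by
  set c' : ℕ := (h - 1) / 2 with hc'
  set m : ℕ := h - 1 with hmdef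
  have hc : 1 ≤ c' := by omega
  have hm : m = 2 * c' := by omega
  set q : ℕ → Sym2 V := fun i => s(w i, w (i+1)) with hq
  have wadjS : ∀ i j, i = j + 1 → j < l → G.Adj (w i) (w j) := by
    rintro i j rfl hj; exact (wadj j hj).symm
  have qES : ∀ i, i < l → q i ∈ G.edgeSet := by
    intro i hi
    exact (G.mem_edgeSet).mpr (wadj i hi)
  have mem1 : ∀ i, w i ∈ q i := fun i => Sym2.mem_mk_left _ _
  have mem2 : ∀ i, w (i+1) ∈ q i := fun i => Sym2.mem_mk_right _ _
  have qmem : ∀ v i, v ∈ q i → v = w i ∨ v = w (i+1) := by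
    intro v i hv
    exact Sym2.mem_iff.mp hv
  have qinj : ∀ i, i ≤ m + 1 → ∀ j, j ≤ m + 1 → q i = q j → i = j := by
    intro i hi j hj hij
    have h1 : w i ∈ q j := by rw [← hij]; exact mem1 i
    have h2 : w (i+1) ∈ q j := by rw [← hij]; exact mem2 i
    have e1 : i = j ∨ i = j + 1 := by
      rcases qmem _ _ h1 with h' | h'
      · exact Or.inl (winj i (by omega) j (by omega) h')
      · exact Or.inr (winj i (by omega) (j+1) (by omega) h')
    have e2 : i + 1 = j ∨ i + 1 = j + 1 := by
      rcases qmem _ _ h2 with h' | h'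
      · exact Or.inl (winj (i+1) (by omega) j (by omega) h')
      · exact Or.inr (winj (i+1) (by omega) (j+1) (by omega) h')
    omega
  have edgesAt2 : ∀ j, 0 < j → 2*j < h → ∀ f ∈ G.edgeSet, w j ∈ f →
      f = q (j-1) ∨ f = q j := by
    intro j hj0 hjh f hf hw
    obtain ⟨u, hadj, rfl⟩ := edge_mem_decomp hf hw
    have hdj : G.degree (w j) = 2 := hdeg j hj0 hjh
    have hadja : G.Adj (w j) (w (j-1)) := wadjS j (j-1) (by omega) (by omega)
    have hadjb : G.Adj (w j) (w (j+1)) := wadj j (by omega)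
    have hne : w (j-1) ≠ w (j+1) := fun hcon => by
      have := winj (j-1) (by omega) (j+1) (by omega) hcon; omega
    rcases deg2_adj hdj hadja hadjb hne hadj with rfl | rfl
    · left
      rw [hq]
      simp only
      rw [show j - 1 + 1 = j by omega]
      exact Sym2.eq_swap
    · right
      rfl
  have edgesAt1 : ∀ f ∈ G.edgeSet, w 0 ∈ f → f = q 0 := by
    intro f hf hw
    obtain ⟨u, hadj, rfl⟩ := edge_mem_decomp hf hw
    have : u = w 1 := deg1_adj hdeg0 (wadj 0 (by omega)) hadj
    rw [this]
  have MQdiag : ∀ i, i < l → MQ G (q i) (q i) = 2 := by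
    intro i hi
    rw [MQ_apply]
    have hsupp : ∀ v, Ninc G v (q i) ≠ 0 → v = w i ∨ v = w (i+1) := by
      intro v hv
      exact qmem _ _ (Ninc_ne_zero G hv).2
    have hne : w i ≠ w (i+1) := fun hcon => by
      have := winj i (by omega) (i+1) (by omega) hcon; omega
    rw [sum_support_two _ _ _ _ hne hsupp]
    rw [Ninc_one G (qES i hi) (mem1 i), Ninc_one G (qES i hi) (mem2 i)]
  have MQadj : ∀ i, i + 1 < l → MQ G (q i) (q (i+1)) = 1 := by
    intro i hi
    rw [MQ_apply]
    have hsupp : ∀ v, Ninc G v (q i) ≠ 0 → v = w i ∨ v = w (i+1) := by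
      intro v hv
      exact qmem _ _ (Ninc_ne_zero G hv).2
    have hne : w i ≠ w (i+1) := fun hcon => by
      have := winj i (by omega) (i+1) (by omega) hcon; omega
    rw [sum_support_two (fun v => Ninc G v (q i)) (fun v => Ninc G v (q (i+1))) _ _ hne hsupp]
    have hz : Ninc G (w i) (q (i+1)) = 0 := by
      rw [Ninc]
      rw [if_neg]
      rintro ⟨hf, hmem⟩
      rcases qmem _ _ hmem with h' | h'
      · have := winj i (by omega) (i+1) (by omega) h'; omega
      · have := winj i (by omega) (i+2) (by omega) h'; omega
    rw [hz, Ninc_one G (qES i (by omega)) (mem2 i),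
      Ninc_one G (qES (i+1) hi) (mem1 (i+1))]
    simp
  -- MasterData for the edge matrix
  have p_inj := qinj
  have p_h0sup : ∀ f, MQ G (q 0) f ≠ 0 → f = q 0 ∨ f = q 1 := by
    intro f hf
    obtain ⟨v, ⟨_, hv1⟩, hv2⟩ := MQ_ne_zero G hf
    rcases qmem _ _ hv1 with rfl | rfl
    · exact Or.inl (edgesAt1 f hv2.1 hv2.2)
    · have := edgesAt2 1 (by omega) (by omega) f hv2.1 hv2.2
      simpa using this
  have p_h0d : MQ G (q 0) (q 0) ≤ 2 := le_of_eq (MQdiag 0 (by omega))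
  have p_h01 : MQ G (q 0) (q 1) ≤ 1 := le_of_eq (MQadj 0 (by omega))
  have p_h1sup : ∀ j, 1 ≤ j → j < c' → ∀ f, MQ G (q j) f ≠ 0 →
      f = q (j-1) ∨ f = q j ∨ f = q (j+1) := by
    intro j hj1 hjc f hf
    obtain ⟨v, ⟨_, hv1⟩, hv2⟩ := MQ_ne_zero G hf
    rcases qmem _ _ hv1 with rfl | rfl
    · rcases edgesAt2 j (by omega) (by omega) f hv2.1 hv2.2 with h' | h'
      · exact Or.inl h'
      · exact Or.inr (Or.inl h')
    · rcases edgesAt2 (j+1) (by omega) (by omega) f hv2.1 hv2.2 with h' | h'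
      · rw [show j + 1 - 1 = j by omega] at h'
        exact Or.inr (Or.inl h')
      · exact Or.inr (Or.inr h')
  have p_h1d : ∀ j, 1 ≤ j → j < c' → MQ G (q j) (q j) = 2 := by
    intro j _ hj
    exact MQdiag j (by omega)
  have p_h1a : ∀ j, 1 ≤ j → j < c' → MQ G (q j) (q (j-1)) = 1 := by
    intro j hj1 hj
    rw [MQ_symm]
    have := MQadj (j-1) (by omega)
    rwa [show j - 1 + 1 = j by omega] at this
  have p_h1b : ∀ j, 1 ≤ j → j < c' → MQ G (q j) (q (j+1)) = 1 := by
    intro j hj1 hj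
    exact MQadj j (by omega)
  have p_h2 : ∀ j, c' < j → j ≤ m → 2 ≤ MQ G (q j) (q j) := by
    intro j _ hj
    exact le_of_eq (MQdiag j (by omega)).symm
  have p_h3 : ∀ j, c' ≤ j → j ≤ m → 1 ≤ MQ G (q j) (q (j+1)) := by
    intro j _ hj
    exact le_of_eq (MQadj j (by omega)).symm
  let D : MasterData (Sym2 V) := ⟨MQ G, c', m, q, hm, hc, MQ_symm G, p_inj, p_h0sup, p_h0d,
    p_h01, p_h1sup, p_h1d, p_h1a, p_h1b, p_h2, p_h3⟩
  have hs_lt_l : s < l := by omega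
  have hrc : r ≤ c' := by omega
  -- RHS lower bound, valid for every k and any lower-bound data
  have Nvs1 : Ninc G (w s) (q (s-1)) = 1 := by
    have : w s ∈ q (s-1) := by
      have := mem2 (s-1)
      rwa [show s - 1 + 1 = s by omega] at this
    exact Ninc_one G (qES (s-1) (by omega)) this
  have Nvs2 : Ninc G (w s) (q s) = 1 := Ninc_one G (qES s hs_lt_l) (mem1 s)
  have hqne_s : q (s-1) ≠ q s := fun hcon => by
    have := qinj (s-1) (by omega) s (by omega) hcon; omega
  have hRHS : ∀ k, ((MQ G ^ k) (q (s-1)) (q (s-1)) + (MQ G ^ k) (q s) (q (s-1)))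
      + ((MQ G ^ k) (q (s-1)) (q s) + (MQ G ^ k) (q s) (q s))
      ≤ (Qn G ^ (k+1)) (w s) (w s) := by
    intro k
    rw [bridgePow G k, NBN_apply]
    have houter := le_sum_two
      (fun f => (∑ e, Ninc G (w s) e * (MQ G ^ k) e f) * Ninc G (w s) f)
      (q (s-1)) (q s) hqne_s
    refine le_trans ?_ houter
    simp only [Nvs1, Nvs2, mul_one]
    have hinner : ∀ f, (MQ G ^ k) (q (s-1)) f + (MQ G ^ k) (q s) f
        ≤ ∑ e, Ninc G (w s) e * (MQ G ^ k) e f := by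
      intro f
      have := le_sum_two (fun e => Ninc G (w s) e * (MQ G ^ k) e f) (q (s-1)) (q s) hqne_s
      simpa only [Nvs1, Nvs2, one_mul] using this
    exact Nat.add_le_add (hinner (q (s-1))) (hinner (q s))
  rcases Nat.eq_zero_or_pos r with rfl | hr1
  · -- r = 0, s = h
    have hs_eq : s = h := by omega
    have rowsupp : ∀ e, Ninc G (w 0) e ≠ 0 → e = q 0 := by
      intro e he
      have := Ninc_ne_zero G he
      exact edgesAt1 e this.1 this.2
    have hLHS : ∀ k, (Qn G ^ (k+1)) (w 0) (w 0) = (MQ G ^ k) (q 0) (q 0) := by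
      intro k
      rw [bridgePow G k, NBN_apply]
      have houter : (∑ f, (∑ e, Ninc G (w 0) e * (MQ G ^ k) e f) * Ninc G (w 0) f)
          = ∑ f, Ninc G (w 0) f * (∑ e, Ninc G (w 0) e * (MQ G ^ k) e f) :=
        Finset.sum_congr rfl fun f _ => mul_comm _ _
      rw [houter, sum_support_one (Ninc G (w 0))
        (fun f => ∑ e, Ninc G (w 0) e * (MQ G ^ k) e f) _ rowsupp,
        sum_support_one (Ninc G (w 0)) (fun e => (MQ G ^ k) e (q 0)) _ rowsupp,
        Ninc_one G (qES 0 (by omega)) (mem1 0)]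
      ring
    have hmaster : ∀ k, (MQ G ^ k) (q 0) (q 0) ≤ (MQ G ^ k) (q m) (q m) := by
      intro k
      have := D.main k _ _ _ _ (D.pairP 0 (by omega)) (D.pairP 0 (by omega))
      simpa using this
    constructor
    · intro k
      match k with
      | 0 => simp [Matrix.one_apply]
      | (k+1) =>
        rw [hLHS k]
        calc (MQ G ^ k) (q 0) (q 0) ≤ (MQ G ^ k) (q m) (q m) := hmaster k
          _ ≤ _ := by
            have := hRHS k
            rw [show s - 1 = m by omega] at this
            omega
    · refine ⟨2 + 1, ?_⟩
      rw [hLHS 2]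
      have hstr := D.strBase
      rw [MasterData.Str] at hstr
      simp only [Nat.sub_zero] at hstr
      calc (MQ G ^ 2) (q 0) (q 0) < (MQ G ^ 2) (q m) (q m) := hstr
        _ ≤ _ := by
          have := hRHS 2
          rw [show s - 1 = m by omega] at this
          omega
  · -- r ≥ 1
    have hdr : G.degree (w r) = 2 := hdeg r (by omega) (by omega)
    have rowsupp : ∀ e, Ninc G (w r) e ≠ 0 → e = q (r-1) ∨ e = q r := by
      intro e he
      have := Ninc_ne_zero G he
      exact edgesAt2 r (by omega) (by omega) e this.1 this.2
    have hqne_r : q (r-1) ≠ q r := fun hcon => by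
      have := qinj (r-1) (by omega) r (by omega) hcon; omega
    have Nvr1 : Ninc G (w r) (q (r-1)) = 1 := by
      have : w r ∈ q (r-1) := by
        have := mem2 (r-1)
        rwa [show r - 1 + 1 = r by omega] at this
      exact Ninc_one G (qES (r-1) (by omega)) this
    have Nvr2 : Ninc G (w r) (q r) = 1 := Ninc_one G (qES r (by omega)) (mem1 r)
    have hLHS : ∀ k, (Qn G ^ (k+1)) (w r) (w r)
        = ((MQ G ^ k) (q (r-1)) (q (r-1)) + (MQ G ^ k) (q r) (q (r-1)))
          + ((MQ G ^ k) (q (r-1)) (q r) + (MQ G ^ k) (q r) (q r)) := by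
      intro k
      rw [bridgePow G k, NBN_apply]
      have houter : (∑ f, (∑ e, Ninc G (w r) e * (MQ G ^ k) e f) * Ninc G (w r) f)
          = ∑ f, Ninc G (w r) f * (∑ e, Ninc G (w r) e * (MQ G ^ k) e f) :=
        Finset.sum_congr rfl fun f _ => mul_comm _ _
      rw [houter]
      have hinner : ∀ f, (∑ e, Ninc G (w r) e * (MQ G ^ k) e f)
          = (MQ G ^ k) (q (r-1)) f + (MQ G ^ k) (q r) f := by
        intro f
        rw [sum_support_two (Ninc G (w r)) (fun e => (MQ G ^ k) e f) _ _ hqne_r rowsupp,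
          Nvr1, Nvr2, one_mul, one_mul]
      rw [sum_support_two (Ninc G (w r))
        (fun f => ∑ e, Ninc G (w r) e * (MQ G ^ k) e f) _ _ hqne_r rowsupp,
        hinner (q (r-1)), hinner (q r), Nvr1, Nvr2, one_mul, one_mul]
    -- master comparisons
    have hidx1 : m - (r-1) = s := by omega
    have hidx2 : m - r = s - 1 := by omega
    have pair1 := D.pairP (r-1) (by show r - 1 ≤ c'; omega)
    have pair2 := D.pairP r (by show r ≤ c'; omega)
    have M11 : ∀ k, (MQ G ^ k) (q (r-1)) (q (r-1)) ≤ (MQ G ^ k) (q s) (q s) := by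
      intro k
      have := D.main k _ _ _ _ pair1 pair1
      simpa [show D.m = m from rfl, hidx1] using this
    have M21 : ∀ k, (MQ G ^ k) (q r) (q (r-1)) ≤ (MQ G ^ k) (q (s-1)) (q s) := by
      intro k
      have := D.main k _ _ _ _ pair2 pair1
      simpa [show D.m = m from rfl, hidx1, hidx2] using this
    have M12 : ∀ k, (MQ G ^ k) (q (r-1)) (q r) ≤ (MQ G ^ k) (q s) (q (s-1)) := by
      intro k
      have := D.main k _ _ _ _ pair1 pair2
      simpa [show D.m = m from rfl, hidx1, hidx2] using this
    have M22 : ∀ k, (MQ G ^ k) (q r) (q r) ≤ (MQ G ^ k) (q (s-1)) (q (s-1)) := by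
      intro k
      have := D.main k _ _ _ _ pair2 pair2
      simpa [show D.m = m from rfl, hidx2] using this
    constructor
    · intro k
      match k with
      | 0 => simp [Matrix.one_apply]
      | (k+1) =>
        rw [hLHS k]
        have := hRHS k
        have m11 := M11 k
        have m21 := M21 k
        have m12 := M12 k
        have m22 := M22 k
        omega
    · refine ⟨2 + (r-1) + (r-1) + 1, ?_⟩
      set k0 : ℕ := 2 + (r-1) + (r-1) with hk0
      rw [hLHS k0]
      have hstr := D.strDiag (r-1) (r-1) le_rfl (by
        show r - 1 < c'
        omega)
      rw [MasterData.Str] at hstr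
      have hstr' : (MQ G ^ k0) (q (r-1)) (q (r-1)) < (MQ G ^ k0) (q s) (q s) := by
        have h' : D.m - (r - 1) = s := hidx1
        rwa [show D.m = m from rfl, hidx1] at hstr
      have := hRHS k0
      have m21 := M21 k0
      have m12 := M12 k0
      have m22 := M22 k0
      omega

end OddCase
section FinalAssembly
open SimpleGraph
variable {V : Type u} [Fintype V] [DecidableEq V] (G : SimpleGraph V) [DecidableRel G.Adj]

lemma h1_case (w : ℕ → V) (l : ℕ) (hll : 2 ≤ l)
    (winj : ∀ i, i ≤ l → ∀ j, j ≤ l → w i = w j → i = j)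
    (wadj : ∀ i, i < l → G.Adj (w i) (w (i+1)))
    (hdeg0 : G.degree (w 0) = 1) :
    (∀ k, (Qn G ^ k) (w 0) (w 0) ≤ (Qn G ^ k) (w 1) (w 1)) ∧
    (∃ k, (Qn G ^ k) (w 0) (w 0) < (Qn G ^ k) (w 1) (w 1)) := by
  set q0 : Sym2 V := s(w 0, w 1) with hq0
  have hES : q0 ∈ G.edgeSet := (G.mem_edgeSet).mpr (wadj 0 (by omega))
  have hm1 : w 0 ∈ q0 := Sym2.mem_mk_left _ _
  have hm2 : w 1 ∈ q0 := Sym2.mem_mk_right _ _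
  have rowsupp : ∀ e, Ninc G (w 0) e ≠ 0 → e = q0 := by
    intro e he
    obtain ⟨hf, hw⟩ := Ninc_ne_zero G he
    obtain ⟨u, hadj, rfl⟩ := edge_mem_decomp hf hw
    have : u = w 1 := deg1_adj hdeg0 (wadj 0 (by omega)) hadj
    rw [this]
  constructor
  · intro k
    match k with
    | 0 => simp [Matrix.one_apply]
    | (k+1) =>
      rw [bridgePow G k, NBN_apply, NBN_apply]
      have houter : (∑ f, (∑ e, Ninc G (w 0) e * (MQ G ^ k) e f) * Ninc G (w 0) f)
          = ∑ f, Ninc G (w 0) f * (∑ e, Ninc G (w 0) e * (MQ G ^ k) e f) :=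
        Finset.sum_congr rfl fun f _ => mul_comm _ _
      rw [houter, sum_support_one (Ninc G (w 0))
        (fun f => ∑ e, Ninc G (w 0) e * (MQ G ^ k) e f) _ rowsupp,
        sum_support_one (Ninc G (w 0)) (fun e => (MQ G ^ k) e q0) _ rowsupp,
        Ninc_one G hES hm1]
      simp only [one_mul]
      have hone : Ninc G (w 1) q0 = 1 := Ninc_one G hES hm2
      have hstep1 : (MQ G ^ k) q0 q0
          ≤ ∑ e, Ninc G (w 1) e * (MQ G ^ k) e q0 := by
        have := le_sum_one (fun e => Ninc G (w 1) e * (MQ G ^ k) e q0) q0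
        simpa [hone] using this
      have hstep2 : (∑ e, Ninc G (w 1) e * (MQ G ^ k) e q0) * Ninc G (w 1) q0
          ≤ ∑ f, (∑ e, Ninc G (w 1) e * (MQ G ^ k) e f) * Ninc G (w 1) f :=
        le_sum_one (fun f => (∑ e, Ninc G (w 1) e * (MQ G ^ k) e f) * Ninc G (w 1) f) q0
      rw [hone, mul_one] at hstep2
      exact le_trans hstep1 hstep2
  · refine ⟨1, ?_⟩
    rw [pow_one, Qn_self, Qn_self, hdeg0]
    have h2 : 2 ≤ G.degree (w 1) := by
      refine two_le_degree ((wadj 0 (by omega)).symm) (wadj 1 (by omega)) ?_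
      intro hcon
      have := winj 0 (by omega) 2 (by omega) hcon
      omega
    omega

end FinalAssembly


/-- Along a pendent path, the closed semi-edge walk counts at the vertex nearer the
pendent end are dominated by those at the vertex farther from it. -/
theorem swCount_closed_le_of_path {V : Type*} [Fintype V] [DecidableEq V]
    (G : SimpleGraph V) [DecidableRel G.Adj]
    {x y : V} (p : G.Walk x y) (hp : p.IsPath) {l : ℕ} (hl : p.length = l)
    (hdeg0 : G.degree x = 1)
    (r s : ℕ) (hrs : r < s) (hsum : r + s ≤ l - 1)
    (hdeg : ∀ i : ℕ, 0 < i → 2 * i < r + s → G.degree (p.getVert i) = 2) :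
    (∀ k : ℕ, swCount G k (p.getVert r) (p.getVert r) ≤
        swCount G k (p.getVert s) (p.getVert s)) ∧
    (∃ k : ℕ, swCount G k (p.getVert r) (p.getVert r) <
        swCount G k (p.getVert s) (p.getVert s)) := by
  set w : ℕ → V := p.getVert with hw
  set h : ℕ := r + s with hh
  have hh1 : 1 ≤ h := by omega
  have hll : h + 1 ≤ l := by omega
  have winj : ∀ i, i ≤ l → ∀ j, j ≤ l → w i = w j → i = j := by
    intro i hi j hj hij
    exact getVert_inj p hp i (by omega) j (by omega) hij
  have wadj : ∀ i, i < l → G.Adj (w i) (w (i+1)) := by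
    intro i hi
    exact p.adj_getVert_succ (by omega)
  have hdeg0' : G.degree (w 0) = 1 := by
    rw [hw]
    rw [p.getVert_zero]
    exact hdeg0
  have key : (∀ k, (Qn G ^ k) (w r) (w r) ≤ (Qn G ^ k) (w s) (w s)) ∧
      (∃ k, (Qn G ^ k) (w r) (w r) < (Qn G ^ k) (w s) (w s)) := by
    rcases Nat.even_or_odd h with hpar | hpar
    · exact even_case G w h l hll winj wadj hdeg0' hdeg r s hrs rfl
        (Nat.even_iff.mp hpar)
    · by_cases h1 : h = 1
      · have hr0 : r = 0 := by omega
        have hs1 : s = 1 := by omega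
        rw [hr0, hs1]
        exact h1_case G w l (by omega) winj wadj hdeg0'
      · exact odd_case G w h l hll winj wadj hdeg0' hdeg r s hrs rfl
          (Nat.odd_iff.mp hpar) (by
            have := Nat.odd_iff.mp hpar
            omega)
  constructor
  · intro k
    rw [swCount_eq_pow, swCount_eq_pow]
    exact key.1 k
  · obtain ⟨k, hk⟩ := key.2
    refine ⟨k, ?_⟩
    rw [swCount_eq_pow, swCount_eq_pow]
    exact hk
end

section
/- For every n ≥ 4, SLEE(C_n) < SLEE(G_(2)), where C_n is the cycle on n vertices and G_(2) is the graph obtained from the cycle C_{n−1} by attaching a single pendent vertex. -/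
open scoped BigOperators

universe u

section Del

variable {α : Type*} [DecidableEq α]

/-- indicator -/
noncomputable def del (a b : α) : ℝ := if a = b then 1 else 0

lemma del_nonneg (a b : α) : 0 ≤ del a b := by unfold del; split <;> norm_num

lemma del_self (a : α) : del a a = 1 := by simp [del]

lemma del_eq_zero {a b : α} (h : a ≠ b) : del a b = 0 := by simp [del, h]

lemma del_eq_one {a b : α} (h : a = b) : del a b = 1 := by simp [del, h]

lemma del_comm (a b : α) : del a b = del b a := by simp [del, eq_comm]

lemma del_le_del {β : Type*} [DecidableEq β] {a b : α} {c d : β}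
    (h : a = b → c = d) : del a b ≤ del c d := by
  unfold del
  by_cases hab : a = b
  · simp [hab, h hab]
  · simp [hab]; split <;> norm_num

lemma del_inj {β : Type*} [DecidableEq β] {f : α → β} (hf : Function.Injective f)
    (a b : α) : del (f a) (f b) = del a b := by
  unfold del
  by_cases hab : a = b
  · simp [hab]
  · have h2 : f a ≠ f b := fun h => hab (hf h)
    simp [hab, h2]

variable [Fintype α]

lemma sum_del_mul (a : α) (f : α → ℝ) : ∑ v, del v a * f v = f a := by
  rw [Finset.sum_eq_single a]
  · simp [del_self]
  · intro b _ hb; simp [del_eq_zero hb]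
  · intro h; exact absurd (Finset.mem_univ a) h

lemma sum_del_mul_del (a b : α) :
    ∑ v, del v a * del v b = del a b := by
  rw [sum_del_mul]

end Del

section TraceLemmas

open Matrix

lemma conjPowEq {α : Type*} [Fintype α] [DecidableEq α] (U D : Matrix α α ℝ)
    (hU : U * star U = 1) (hU' : star U * U = 1) (k : ℕ) :
    (U * D * star U) ^ k = U * D ^ k * star U := by
  induction k with
  | zero => simpa using hU.symm
  | succ k ih =>
      rw [pow_succ, ih, pow_succ]
      calc U * D ^ k * star U * (U * D * star U)
          = U * D ^ k * (star U * U) * D * star U := by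
            simp only [Matrix.mul_assoc]
        _ = U * (D ^ k * D) * star U := by rw [hU']; simp only [Matrix.mul_assoc, Matrix.mul_one]
        _ = _ := by simp only [Matrix.mul_assoc]

lemma trace_pow_eq_sum_eig {V : Type*} [Fintype V] [DecidableEq V]
    {M : Matrix V V ℝ} (hM : M.IsHermitian) (k : ℕ) :
    (M ^ k).trace = ∑ i, hM.eigenvalues i ^ k := by
  have hU : (hM.eigenvectorUnitary : Matrix V V ℝ) * star (hM.eigenvectorUnitary : Matrix V V ℝ) = 1 :=
    Matrix.mem_unitaryGroup_iff.mp (hM.eigenvectorUnitary).2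
  have hU' : star (hM.eigenvectorUnitary : Matrix V V ℝ) * (hM.eigenvectorUnitary : Matrix V V ℝ) = 1 :=
    Matrix.mem_unitaryGroup_iff'.mp (hM.eigenvectorUnitary).2
  nth_rewrite 1 [hM.spectral_theorem]
  rw [Unitary.conjStarAlgAut_apply]
  rw [conjPowEq _ _ hU hU', Matrix.trace_mul_comm, ← Matrix.mul_assoc, hU', Matrix.one_mul,
    Matrix.diagonal_pow, Matrix.trace_diagonal]
  simp [Function.comp]

lemma trace_mul_pow_comm {α β : Type*} [Fintype α] [Fintype β] [DecidableEq α] [DecidableEq β]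
    (B : Matrix α β ℝ) (k : ℕ) :
    ((B * Bᵀ) ^ (k + 1)).trace = ((Bᵀ * B) ^ (k + 1)).trace := by
  have h : ∀ m : ℕ, (B * Bᵀ) ^ (m + 1) = B * (Bᵀ * B) ^ m * Bᵀ := by
    intro m
    induction m with
    | zero => simp [pow_succ, Matrix.mul_assoc]
    | succ m ih =>
        rw [pow_succ, ih]
        calc B * (Bᵀ * B) ^ m * Bᵀ * (B * Bᵀ)
            = B * ((Bᵀ * B) ^ m * (Bᵀ * B)) * Bᵀ := by simp only [Matrix.mul_assoc]
          _ = B * (Bᵀ * B) ^ (m + 1) * Bᵀ := by rw [← pow_succ]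
  rw [h k, Matrix.trace_mul_comm (B * (Bᵀ * B) ^ k) Bᵀ, ← Matrix.mul_assoc, ← pow_succ']

lemma entry_pow_le {α β : Type*} [Fintype α] [Fintype β] [DecidableEq α] [DecidableEq β]
    (A : Matrix α α ℝ) (B : Matrix β β ℝ) (e : α ≃ β)
    (hA : ∀ i j, 0 ≤ A i j) (hAB : ∀ i j, A i j ≤ B (e i) (e j)) (k : ℕ) :
    ∀ i j, 0 ≤ (A ^ k) i j ∧ (A ^ k) i j ≤ (B ^ k) (e i) (e j) := by
  have hB : ∀ i j, 0 ≤ B i j := by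
    intro i j
    have := (hA (e.symm i) (e.symm j)).trans (hAB (e.symm i) (e.symm j))
    simpa using this
  induction k with
  | zero =>
      intro i j
      constructor
      · rw [pow_zero, Matrix.one_apply]; split <;> norm_num
      · rw [pow_zero, pow_zero, Matrix.one_apply, Matrix.one_apply]
        by_cases h : i = j
        · simp [h]
        · simp [h, fun hh => h (e.injective hh)]
  | succ k ih =>
      intro i j
      rw [pow_succ, pow_succ, Matrix.mul_apply, Matrix.mul_apply]
      constructor
      · exact Finset.sum_nonneg fun l _ => mul_nonneg (ih i l).1 (hA l j)
      · calc ∑ l, (A ^ k) i l * A l j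
            ≤ ∑ l, (B ^ k) (e i) (e l) * B (e l) (e j) :=
              Finset.sum_le_sum fun l _ =>
                mul_le_mul (ih i l).2 (hAB l j) (hA l j) ((ih i l).1.trans (ih i l).2)
          _ = ∑ l : β, (B ^ k) (e i) l * B l (e j) :=
              Fintype.sum_equiv e _ _ fun l => rfl
          _ = _ := rfl

lemma trace_pow_le {α β : Type*} [Fintype α] [Fintype β] [DecidableEq α] [DecidableEq β]
    (A : Matrix α α ℝ) (B : Matrix β β ℝ) (e : α ≃ β)
    (hA : ∀ i j, 0 ≤ A i j) (hAB : ∀ i j, A i j ≤ B (e i) (e j)) (k : ℕ) :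
    (A ^ k).trace ≤ (B ^ k).trace := by
  calc (A ^ k).trace = ∑ i, (A ^ k) i i := rfl
    _ ≤ ∑ i, (B ^ k) (e i) (e i) :=
        Finset.sum_le_sum fun i _ => (entry_pow_le A B e hA hAB k i i).2
    _ = ∑ j, (B ^ k) j j := Fintype.sum_equiv e _ _ fun i => rfl
    _ = (B ^ k).trace := rfl

lemma trace_sq_lt {α β : Type*} [Fintype α] [Fintype β] [DecidableEq α] [DecidableEq β]
    (A : Matrix α α ℝ) (B : Matrix β β ℝ) (e : α ≃ β)
    (hA : ∀ i j, 0 ≤ A i j) (hAB : ∀ i j, A i j ≤ B (e i) (e j))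
    (i0 j0 : α) (hstrict : A i0 j0 < B (e i0) (e j0)) (hpos : 0 < B (e j0) (e i0)) :
    (A ^ 2).trace < (B ^ 2).trace := by
  have hB : ∀ i j, 0 ≤ B i j := by
    intro i j
    have := (hA (e.symm i) (e.symm j)).trans (hAB (e.symm i) (e.symm j))
    simpa using this
  have key : ∀ i j : α, A i j * A j i ≤ B (e i) (e j) * B (e j) (e i) := fun i j =>
    mul_le_mul (hAB i j) (hAB j i) (hA j i) (hB _ _)
  have keystrict : A i0 j0 * A j0 i0 < B (e i0) (e j0) * B (e j0) (e i0) := by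
    calc A i0 j0 * A j0 i0 ≤ A i0 j0 * B (e j0) (e i0) :=
          mul_le_mul_of_nonneg_left (hAB j0 i0) (hA i0 j0)
      _ < B (e i0) (e j0) * B (e j0) (e i0) :=
          mul_lt_mul_of_pos_right hstrict hpos
  have hA2 : (A ^ 2).trace = ∑ i, ∑ j, A i j * A j i := by
    simp [Matrix.trace, pow_two, Matrix.mul_apply, Matrix.diag_apply, Matrix.diag]
  have hB2 : (B ^ 2).trace = ∑ i : α, ∑ j : α, B (e i) (e j) * B (e j) (e i) := by
    have h1 : (B ^ 2).trace = ∑ i : β, ∑ j : β, B i j * B j i := by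
      simp [Matrix.trace, pow_two, Matrix.mul_apply, Matrix.diag_apply, Matrix.diag]
    rw [h1]
    calc ∑ i : β, ∑ j : β, B i j * B j i
        = ∑ i : α, ∑ j : β, B (e i) j * B j (e i) := (Equiv.sum_comp e _).symm
      _ = ∑ i : α, ∑ j : α, B (e i) (e j) * B (e j) (e i) :=
          Finset.sum_congr rfl fun i _ => (Equiv.sum_comp e _).symm
  rw [hA2, hB2]
  refine Finset.sum_lt_sum (fun i _ => Finset.sum_le_sum fun j _ => key i j) ⟨i0, Finset.mem_univ _, ?_⟩
  exact Finset.sum_lt_sum (fun j _ => key i0 j) ⟨j0, Finset.mem_univ _, keystrict⟩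

end TraceLemmas

section SLEEseries

/-- trace of the k-th power of the signless Laplacian, with classical instances. -/
noncomputable def traceQpow {V : Type u} [Fintype V] (G : SimpleGraph V) (k : ℕ) : ℝ :=
  letI := Classical.decEq V
  ((signLap G ^ k).trace)

lemma traceQpow_eq {V : Type u} [Fintype V] [inst : DecidableEq V] (G : SimpleGraph V) (k : ℕ) :
    traceQpow G k = ((signLap G ^ k).trace) := by
  unfold traceQpow
  have : Classical.decEq V = inst := Subsingleton.elim _ _
  rw [this]

lemma SLEE_eq_tsum {V : Type u} [Fintype V] (G : SimpleGraph V) :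
    SLEE G = ∑' k : ℕ, traceQpow G k / (Nat.factorial k : ℝ) := by
  letI := Classical.decEq V
  have h1 : ∀ x : ℝ, Real.exp x = ∑' k : ℕ, x ^ k / (Nat.factorial k : ℝ) := by
    intro x
    rw [Real.exp_eq_exp_ℝ, NormedSpace.exp_eq_tsum_div]
  have h2 : ∀ k : ℕ, traceQpow G k / (Nat.factorial k : ℝ)
      = ∑ i, (signLapEig G i) ^ k / (Nat.factorial k : ℝ) := by
    intro k
    rw [traceQpow_eq, trace_pow_eq_sum_eig (signLap_isHermitian G) k, Finset.sum_div]
    rfl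
  unfold SLEE
  simp_rw [h1, h2]
  exact (Summable.tsum_finsetSum fun i _ => Real.summable_pow_div_factorial _).symm

lemma summable_SLEE {V : Type u} [Fintype V] (G : SimpleGraph V) :
    Summable (fun k : ℕ => traceQpow G k / (Nat.factorial k : ℝ)) := by
  letI := Classical.decEq V
  have h2 : (fun k : ℕ => traceQpow G k / (Nat.factorial k : ℝ))
      = fun k => ∑ i, (signLapEig G i) ^ k / (Nat.factorial k : ℝ) := by
    funext k
    rw [traceQpow_eq, trace_pow_eq_sum_eig (signLap_isHermitian G) k, Finset.sum_div]
    rfl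
  rw [h2]
  exact summable_sum fun i _ => Real.summable_pow_div_factorial _

end SLEEseries

section DelSums

variable {α : Type*} [Fintype α] [DecidableEq α]

lemma sum_del_pairs (e f e' f' : α) :
    ∑ v, (del v e + del v e') * (del v f + del v f')
      = del e f + del e f' + del e' f + del e' f' := by
  have expand : ∀ v : α, (del v e + del v e') * (del v f + del v f')
      = del v e * del v f + del v e * del v f' + del v e' * del v f + del v e' * del v f' := by
    intro v; ring
  rw [Finset.sum_congr rfl fun v _ => expand v]
  rw [Finset.sum_add_distrib, Finset.sum_add_distrib, Finset.sum_add_distrib]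
  rw [sum_del_mul_del e f, sum_del_mul_del e f',
    sum_del_mul_del e' f, sum_del_mul_del e' f']

lemma sum_del_mul_fun (a : α) (f : α → ℝ) : ∑ v, f v * del v a = f a := by
  have h : ∀ v, f v * del v a = del v a * f v := fun v => mul_comm _ _
  rw [Finset.sum_congr rfl fun v _ => h v, sum_del_mul]

end DelSums

section ShiftSums

variable {m : ℕ} [NeZero m]

lemma del_add_one (a b : Fin m) : del (a + 1) (b + 1) = del a b := by
  by_cases h : a = b
  · simp [h, del_self]
  · rw [del_eq_zero (fun hh => h (by exact add_right_cancel hh)), del_eq_zero h]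

lemma sum_del_pairs_shift (a b : Fin m) :
    ∑ e : Fin m, (del e a + del (e + 1) a) * (del e b + del (e + 1) b)
      = 2 * del a b + del a (b + 1) + del (a + 1) b := by
  have expand : ∀ e : Fin m, (del e a + del (e + 1) a) * (del e b + del (e + 1) b)
      = del e a * del e b + del e a * del (e + 1) b + del (e + 1) a * del e b
        + del (e + 1) a * del (e + 1) b := by
    intro e; ring
  rw [Finset.sum_congr rfl fun e _ => expand e]
  rw [Finset.sum_add_distrib, Finset.sum_add_distrib, Finset.sum_add_distrib]
  have T1 : ∑ e : Fin m, del e a * del e b = del a b := sum_del_mul_del a b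
  have T2 : ∑ e : Fin m, del e a * del (e + 1) b = del (a + 1) b :=
    sum_del_mul a (fun e => del (e + 1) b)
  have T3 : ∑ e : Fin m, del (e + 1) a * del e b = del a (b + 1) := by
    have h : ∀ e : Fin m, del (e + 1) a * del e b = del e b * del (e + 1) a :=
      fun e => mul_comm _ _
    rw [Finset.sum_congr rfl fun e _ => h e, sum_del_mul b (fun e => del (e + 1) a)]
    exact del_comm _ _
  have T4 : ∑ e : Fin m, del (e + 1) a * del (e + 1) b = del a b := by
    rw [Fintype.sum_equiv (Equiv.addRight (1 : Fin m))
      (fun e => del (e + 1) a * del (e + 1) b) (fun e => del e a * del e b) (fun e => rfl)]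
    exact sum_del_mul_del a b
  rw [T1, T2, T3, T4]
  ring

lemma fin_val_one (hm : 2 ≤ m) : (1 : Fin m).val = 1 := by
  rw [Fin.val_one']
  exact Nat.mod_eq_of_lt (by omega)

lemma fin_val_add_one (hm : 2 ≤ m) (i : Fin m) :
    (i + 1).val = if i.val + 1 = m then 0 else i.val + 1 := by
  have key : (i + 1).val = (i.val + 1) % m := by
    simp [Fin.add_def, fin_val_one hm]
  rw [key]
  rcases Nat.lt_or_ge (i.val + 1) m with h | h
  · rw [Nat.mod_eq_of_lt h, if_neg (by omega)]
  · have h3 : i.val + 1 = m := by have := i.isLt; omega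
    rw [h3, Nat.mod_self]
    rw [if_pos rfl]

lemma fin_val_sub_one (hm : 2 ≤ m) (i : Fin m) :
    (i - 1).val = if i.val = 0 then m - 1 else i.val - 1 := by
  have key : (i - 1).val = (i.val + (m - 1)) % m := by
    simp [Fin.sub_def, Nat.mod_eq_of_lt (show (1:ℕ) < m by omega), Nat.add_comm]
  rw [key]
  rcases Nat.eq_zero_or_pos i.val with h | h
  · rw [h, if_pos rfl]
    simpa using Nat.mod_eq_of_lt (by omega)
  · rw [if_neg (by omega)]
    have h2 : i.val + (m - 1) = m + (i.val - 1) := by omega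
    rw [h2, Nat.add_mod_left, Nat.mod_eq_of_lt (by have := i.isLt; omega)]

end ShiftSums

section SignLapApply

open Matrix

lemma signLap_apply {V : Type u} [Fintype V] [DecidableEq V] (G : SimpleGraph V)
    [DecidableRel G.Adj] (i j : V) :
    signLap G i j
      = (if i = j then (G.degree i : ℝ) else 0) + (if G.Adj i j then 1 else 0) := by
  have e1 : (Classical.decEq V) = ‹DecidableEq V› := Subsingleton.elim _ _
  have e2 : (Classical.decRel G.Adj) = ‹DecidableRel G.Adj› := Subsingleton.elim _ _
  unfold signLap
  rw [e1, e2]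
  rw [Matrix.add_apply, Matrix.diagonal_apply, SimpleGraph.adjMatrix_apply]

end SignLapApply

section CycleSide

open Matrix

variable {n : ℕ} [NeZero n]

noncomputable def Bcyc (n : ℕ) [NeZero n] : Matrix (Fin n) (Fin n) ℝ :=
  fun v e => del v e + del v (e + 1)

lemma fin_ne_add_one (hn : 2 ≤ n) (i : Fin n) : i ≠ i + 1 := by
  intro h
  have h2 := congrArg Fin.val h
  rw [fin_val_add_one hn i] at h2
  have := i.isLt
  split_ifs at h2 <;> omega

lemma cycle_adj (hn : 4 ≤ n) (i j : Fin n) :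
    (cycleGraph' n).Adj i j ↔ j = i + 1 ∨ i = j + 1 := by
  have h2 : (2:ℕ) ≤ n := by omega
  have key : ∀ a b : Fin n, ((a.val + 1) % n = b.val) ↔ b = a + 1 := by
    intro a b
    rw [Fin.ext_iff, fin_val_add_one h2 a]
    constructor
    · intro h
      rcases Nat.lt_or_ge (a.val + 1) n with hh | hh
      · rw [Nat.mod_eq_of_lt hh] at h
        rw [if_neg (by omega)]
        omega
      · have h3 : a.val + 1 = n := by have := a.isLt; omega
        rw [h3, Nat.mod_self] at h
        rw [if_pos h3]
        omega
    · intro h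
      split_ifs at h with hc
      · rw [hc, Nat.mod_self]
        omega
      · rw [Nat.mod_eq_of_lt (by have := a.isLt; omega)]
        omega
  rw [cycleGraph', SimpleGraph.fromRel_adj]
  constructor
  · rintro ⟨hne, h | h⟩
    · exact Or.inl ((key i j).mp h)
    · exact Or.inr ((key j i).mp h)
  · rintro (h | h)
    · exact ⟨by rw [h]; exact fin_ne_add_one h2 i, Or.inl ((key i j).mpr h)⟩
    · exact ⟨by rw [h]; exact (fin_ne_add_one h2 j).symm, Or.inr ((key j i).mpr h)⟩

lemma cycle_degree (hn : 4 ≤ n) (i : Fin n) [Fintype ((cycleGraph' n).neighborSet i)] :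
    (cycleGraph' n).degree i = 2 := by
  have h2 : (2:ℕ) ≤ n := by omega
  have h : (cycleGraph' n).neighborFinset i = {i + 1, i - 1} := by
    ext w
    rw [SimpleGraph.mem_neighborFinset, cycle_adj hn]
    rw [Finset.mem_insert, Finset.mem_singleton]
    have hiff : i = w + 1 ↔ w = i - 1 := by
      rw [eq_sub_iff_add_eq, eq_comm]
    rw [hiff]
  rw [← SimpleGraph.card_neighborFinset_eq_degree, h]
  rw [Finset.card_insert_of_notMem, Finset.card_singleton]
  rw [Finset.mem_singleton]
  intro hh
  have hv := congrArg Fin.val hh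
  rw [fin_val_add_one h2 i, fin_val_sub_one h2 i] at hv
  have := i.isLt
  split_ifs at hv <;> omega

lemma BcycBT_apply (i j : Fin n) :
    (Bcyc n * (Bcyc n)ᵀ) i j = 2 * del i j + del i (j + 1) + del (i + 1) j := by
  rw [Matrix.mul_apply]
  have h : ∀ e, Bcyc n i e * (Bcyc n)ᵀ e j
      = (del e i + del (e + 1) i) * (del e j + del (e + 1) j) := by
    intro e
    simp only [Matrix.transpose_apply, Bcyc]
    rw [del_comm i e, del_comm i (e + 1), del_comm j e, del_comm j (e + 1)]
  rw [Finset.sum_congr rfl fun e _ => h e, sum_del_pairs_shift i j]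

lemma BTBcyc_apply (e f : Fin n) :
    ((Bcyc n)ᵀ * Bcyc n) e f = 2 * del e f + del e (f + 1) + del (e + 1) f := by
  rw [Matrix.mul_apply]
  have h : ∀ v, (Bcyc n)ᵀ e v * Bcyc n v f
      = (del v e + del v (e + 1)) * (del v f + del v (f + 1)) := by
    intro v
    simp only [Matrix.transpose_apply, Bcyc]
  rw [Finset.sum_congr rfl fun v _ => h v, sum_del_pairs e f (e + 1) (f + 1)]
  rw [del_add_one]
  have hc : del (e + 1) f = del f (e + 1) := del_comm _ _
  ring

lemma signLap_cycle (hn : 4 ≤ n) :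
    signLap (cycleGraph' n) = Bcyc n * (Bcyc n)ᵀ := by
  classical
  have h2 : (2:ℕ) ≤ n := by omega
  ext i j
  rw [BcycBT_apply, signLap_apply]
  by_cases hij : i = j
  · subst hij
    rw [if_pos rfl, cycle_degree hn i, if_neg (SimpleGraph.irrefl _)]
    rw [del_self, del_eq_zero (fin_ne_add_one h2 i), del_eq_zero (fin_ne_add_one h2 i).symm]
    norm_num
  · rw [if_neg hij]
    by_cases ha : j = i + 1 <;> by_cases hb : i = j + 1
    · exfalso
      have hv1 := congrArg Fin.val ha
      have hv2 := congrArg Fin.val hb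
      rw [fin_val_add_one h2 i] at hv1
      rw [fin_val_add_one h2 j] at hv2
      have := i.isLt
      have := j.isLt
      have h4 : (4:ℕ) ≤ n := hn
      split_ifs at hv1 hv2 <;> omega
    · rw [if_pos ((cycle_adj hn i j).mpr (Or.inl ha))]
      rw [del_eq_zero hij, del_eq_zero hb, del_eq_one ha.symm]
      norm_num
    · rw [if_pos ((cycle_adj hn i j).mpr (Or.inr hb))]
      rw [del_eq_zero hij, del_eq_one hb, del_eq_zero (fun hh => ha hh.symm)]
      norm_num
    · rw [if_neg (fun hadj => by rcases (cycle_adj hn i j).mp hadj with h | h <;> tauto)]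
      rw [del_eq_zero hij, del_eq_zero hb, del_eq_zero (fun hh => ha hh.symm)]
      norm_num

end CycleSide

section PendantSide

open Matrix Sum

variable {q : ℕ} [NeZero q]

abbrev pfun (q : ℕ) : Fin q → ℕ := fun i => if i.val = 0 then 1 else 0

abbrev VG (q : ℕ) := Fin q ⊕ Σ i : Fin q, Fin (pfun q i)

def pvert (q : ℕ) [NeZero q] : Σ i : Fin q, Fin (pfun q i) :=
  ⟨0, ⟨0, by simp [pfun]⟩⟩

lemma sigma_unique (s : Σ i : Fin q, Fin (pfun q i)) : s = pvert q := by
  obtain ⟨i, x⟩ := s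
  have hx := x.isLt
  by_cases h : i.val = 0
  · have hi : i = 0 := Fin.ext h
    subst hi
    have hx0 : x.val = 0 := by
      have hx2 : x.val < 1 := lt_of_lt_of_eq hx rfl
      omega
    exact congrArg _ (Fin.ext (by simpa using hx0))
  · exfalso
    simp [pfun, h] at hx

lemma del_sum_inl_inl {A B : Type*} [DecidableEq A] [DecidableEq B] (a b : A) :
    del (Sum.inl a : A ⊕ B) (Sum.inl b) = del a b := del_inj Sum.inl_injective a b

lemma del_sum_inl_inr {A B : Type*} [DecidableEq A] [DecidableEq B] (a : A) (s : B) :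
    del (Sum.inl a : A ⊕ B) (Sum.inr s) = 0 := del_eq_zero (by simp)

lemma del_sum_inr_inl {A B : Type*} [DecidableEq A] [DecidableEq B] (s : B) (a : A) :
    del (Sum.inr s : A ⊕ B) (Sum.inl a) = 0 := del_eq_zero (by simp)

lemma del_sum_inr_inr {A B : Type*} [DecidableEq A] [DecidableEq B] (s t : B) :
    del (Sum.inr s : A ⊕ B) (Sum.inr t) = del s t := del_inj Sum.inr_injective s t

lemma del_sigma (s t : Σ i : Fin q, Fin (pfun q i)) : del s t = 1 :=
  del_eq_one ((sigma_unique s).trans (sigma_unique t).symm)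

lemma fin_succ_mod_iff {m : ℕ} [NeZero m] (hm : 2 ≤ m) (a b : Fin m) :
    ((a.val + 1) % m = b.val) ↔ b = a + 1 := by
  rw [Fin.ext_iff, fin_val_add_one hm a]
  constructor
  · intro h
    rcases Nat.lt_or_ge (a.val + 1) m with hh | hh
    · rw [Nat.mod_eq_of_lt hh] at h
      rw [if_neg (by omega)]
      omega
    · have h3 : a.val + 1 = m := by have := a.isLt; omega
      rw [h3, Nat.mod_self] at h
      rw [if_pos h3]
      omega
  · intro h
    split_ifs at h with hc
    · rw [hc, Nat.mod_self]
      omega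
    · rw [Nat.mod_eq_of_lt (by have := a.isLt; omega)]
      omega

lemma fin_add_ne_sub (hq : 3 ≤ q) (i : Fin q) : i + 1 ≠ i - 1 := by
  intro h
  have hv := congrArg Fin.val h
  rw [fin_val_add_one (by omega) i, fin_val_sub_one (by omega) i] at hv
  have := i.isLt
  split_ifs at hv <;> omega

lemma CqP_adj_inl_inl (hq : 3 ≤ q) (i j : Fin q) :
    (CqP q (pfun q)).Adj (Sum.inl i) (Sum.inl j) ↔ j = i + 1 ∨ i = j + 1 := by
  have h2 : (2:ℕ) ≤ q := by omega
  rw [CqP, SimpleGraph.fromRel_adj]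
  constructor
  · rintro ⟨hne, h | h⟩
    · rcases h with ⟨i', j', hi, hj, hrel⟩ | ⟨i', hh, hi, hj⟩ | ⟨i', a, b, hi, hj, hrel⟩
      · obtain rfl := Sum.inl_injective hi
        obtain rfl := Sum.inl_injective hj
        exact Or.inl ((fin_succ_mod_iff h2 _ _).mp hrel)
      · simp at hj
      · simp at hi
    · rcases h with ⟨i', j', hi, hj, hrel⟩ | ⟨i', hh, hi, hj⟩ | ⟨i', a, b, hi, hj, hrel⟩
      · obtain rfl := Sum.inl_injective hi
        obtain rfl := Sum.inl_injective hj
        exact Or.inr ((fin_succ_mod_iff h2 _ _).mp hrel)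
      · simp at hj
      · simp at hi
  · rintro (h | h)
    · refine ⟨?_, Or.inl (Or.inl ⟨i, j, rfl, rfl, (fin_succ_mod_iff h2 i j).mpr h⟩)⟩
      intro hh
      obtain rfl := Sum.inl_injective hh
      exact fin_ne_add_one h2 i h
    · refine ⟨?_, Or.inr (Or.inl ⟨j, i, rfl, rfl, (fin_succ_mod_iff h2 j i).mpr h⟩)⟩
      intro hh
      obtain rfl := Sum.inl_injective hh
      exact fin_ne_add_one h2 i h

lemma CqP_adj_inl_inr (i : Fin q) (s : Σ i : Fin q, Fin (pfun q i)) :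
    (CqP q (pfun q)).Adj (Sum.inl i) (Sum.inr s) ↔ i = 0 := by
  rw [CqP, SimpleGraph.fromRel_adj]
  constructor
  · rintro ⟨hne, h | h⟩
    · rcases h with ⟨i', j', hi, hj, hrel⟩ | ⟨i', hh, hi, hj⟩ | ⟨i', a, b, hi, hj, hrel⟩
      · simp at hj
      · obtain rfl := Sum.inl_injective hi
        have hz : i.val = 0 := by
          by_contra hc
          simp [pfun, hc] at hh
        exact Fin.ext hz
      · simp at hi
    · rcases h with ⟨i', j', hi, hj, hrel⟩ | ⟨i', hh, hi, hj⟩ | ⟨i', a, b, hi, hj, hrel⟩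
      · simp at hi
      · simp at hi
      · simp at hj
  · rintro rfl
    have hpos : 0 < pfun q 0 := by simp [pfun]
    refine ⟨by simp, Or.inl (Or.inr (Or.inl ⟨0, hpos, rfl, ?_⟩))⟩
    rw [sigma_unique s]
    rfl

lemma CqP_not_adj_inr_inr (s t : Σ i : Fin q, Fin (pfun q i)) :
    ¬ (CqP q (pfun q)).Adj (Sum.inr s) (Sum.inr t) := by
  intro h
  have hne := h.ne
  rw [sigma_unique s, sigma_unique t] at hne
  exact hne rfl

lemma CqP_deg_inl (hq : 3 ≤ q) (i : Fin q)
    [Fintype ((CqP q (pfun q)).neighborSet (Sum.inl i))] :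
    (CqP q (pfun q)).degree (Sum.inl i) = if i = 0 then 3 else 2 := by
  have h2 : (2:ℕ) ≤ q := by omega
  have hmem : ∀ w : VG q, (CqP q (pfun q)).Adj (Sum.inl i) w
      ↔ ((w = Sum.inl (i + 1) ∨ w = Sum.inl (i - 1)) ∨ (i = 0 ∧ w = Sum.inr (pvert q))) := by
    intro w
    rcases w with j | s
    · rw [CqP_adj_inl_inl hq]
      have hiff : i = j + 1 ↔ j = i - 1 := by rw [eq_sub_iff_add_eq, eq_comm]
      simp only [Sum.inl.injEq, reduceCtorEq, and_false, or_false]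
      rw [hiff]
    · rw [CqP_adj_inl_inr]
      have hs : Sum.inr s = (Sum.inr (pvert q) : VG q) := by rw [sigma_unique s]
      simp only [reduceCtorEq, false_or, hs, and_true]
  by_cases hi : i = 0
  · subst hi
    have h : (CqP q (pfun q)).neighborFinset (Sum.inl 0)
        = {Sum.inl (0 + 1), Sum.inl (0 - 1), Sum.inr (pvert q)} := by
      ext w
      rw [SimpleGraph.mem_neighborFinset, hmem]
      simp only [Finset.mem_insert, Finset.mem_singleton, true_and]
      tauto
    rw [← SimpleGraph.card_neighborFinset_eq_degree, h, if_pos rfl]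
    rw [Finset.card_insert_of_notMem, Finset.card_insert_of_notMem, Finset.card_singleton]
    · simp
    · simp only [Finset.mem_insert, Finset.mem_singleton]
      push_neg
      exact ⟨by simpa using fin_add_ne_sub hq 0, by simp⟩
  · have h : (CqP q (pfun q)).neighborFinset (Sum.inl i)
        = {Sum.inl (i + 1), Sum.inl (i - 1)} := by
      ext w
      rw [SimpleGraph.mem_neighborFinset, hmem]
      simp only [Finset.mem_insert, Finset.mem_singleton, hi, false_and, or_false]
    rw [← SimpleGraph.card_neighborFinset_eq_degree, h, if_neg hi]
    rw [Finset.card_insert_of_notMem, Finset.card_singleton]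
    simpa using fin_add_ne_sub hq i

lemma CqP_deg_inr (s : Σ i : Fin q, Fin (pfun q i))
    [Fintype ((CqP q (pfun q)).neighborSet (Sum.inr s))] :
    (CqP q (pfun q)).degree (Sum.inr s) = 1 := by
  have h : (CqP q (pfun q)).neighborFinset (Sum.inr s) = {Sum.inl 0} := by
    ext w
    rw [SimpleGraph.mem_neighborFinset]
    rcases w with j | t
    · rw [SimpleGraph.adj_comm, CqP_adj_inl_inr]
      simp [Sum.inl.injEq]
    · simp only [Finset.mem_singleton, reduceCtorEq, iff_false]
      exact CqP_not_adj_inr_inr s t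
  rw [← SimpleGraph.card_neighborFinset_eq_degree, h, Finset.card_singleton]

noncomputable def Bpen (q : ℕ) [NeZero q] : Matrix (VG q) (Fin q ⊕ Fin 1) ℝ :=
  fun v e => Sum.elim
    (fun e' => del v (Sum.inl e') + del v (Sum.inl (e' + 1)))
    (fun _ => del v (Sum.inl 0) + del v (Sum.inr (pvert q))) e

lemma BpenBT_apply (x y : VG q) :
    (Bpen q * (Bpen q)ᵀ) x y
      = (∑ e : Fin q, (del x (Sum.inl e) + del x (Sum.inl (e + 1)))
            * (del y (Sum.inl e) + del y (Sum.inl (e + 1))))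
        + (del x (Sum.inl 0) + del x (Sum.inr (pvert q)))
            * (del y (Sum.inl 0) + del y (Sum.inr (pvert q))) := by
  rw [Matrix.mul_apply, Fintype.sum_sum_type]
  simp only [Matrix.transpose_apply, Bpen, Sum.elim_inl, Sum.elim_inr]
  rw [Fin.sum_univ_one]

lemma BpenBT_inl_inl (a b : Fin q) :
    (Bpen q * (Bpen q)ᵀ) (Sum.inl a) (Sum.inl b)
      = 2 * del a b + del a (b + 1) + del (a + 1) b + del a 0 * del b 0 := by
  rw [BpenBT_apply]
  simp only [del_sum_inl_inl, del_sum_inl_inr, add_zero]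
  have h : ∀ e : Fin q, (del a e + del a (e + 1)) * (del b e + del b (e + 1))
      = (del e a + del (e + 1) a) * (del e b + del (e + 1) b) := by
    intro e
    rw [del_comm a e, del_comm a (e + 1), del_comm b e, del_comm b (e + 1)]
  rw [Finset.sum_congr rfl fun e _ => h e, sum_del_pairs_shift a b]

lemma BpenBT_inl_inr (a : Fin q) (s : Σ i : Fin q, Fin (pfun q i)) :
    (Bpen q * (Bpen q)ᵀ) (Sum.inl a) (Sum.inr s) = del a 0 := by
  rw [BpenBT_apply]
  simp only [del_sum_inl_inl, del_sum_inl_inr, del_sum_inr_inl, add_zero, zero_add,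
    del_sigma, mul_one, mul_zero, Finset.sum_const_zero, zero_mul]
  rw [del_sum_inr_inr, del_sigma, mul_one]

lemma BpenBT_inr_inl (s : Σ i : Fin q, Fin (pfun q i)) (b : Fin q) :
    (Bpen q * (Bpen q)ᵀ) (Sum.inr s) (Sum.inl b) = del b 0 := by
  rw [BpenBT_apply]
  simp only [del_sum_inl_inl, del_sum_inl_inr, del_sum_inr_inl, add_zero, zero_add,
    del_sigma, one_mul, mul_zero, zero_mul, Finset.sum_const_zero]
  rw [del_sum_inr_inr, del_sigma, one_mul]

lemma BpenBT_inr_inr (s t : Σ i : Fin q, Fin (pfun q i)) :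
    (Bpen q * (Bpen q)ᵀ) (Sum.inr s) (Sum.inr t) = 1 := by
  rw [BpenBT_apply]
  simp only [del_sum_inl_inr, del_sum_inr_inl, del_sigma, zero_add, add_zero, one_mul, mul_zero,
    zero_mul, Finset.sum_const_zero]
  rw [del_sum_inr_inr, del_sum_inr_inr, del_sigma, del_sigma, mul_one]

lemma signLap_CqP (hq : 3 ≤ q) :
    signLap (CqP q (pfun q)) = Bpen q * (Bpen q)ᵀ := by
  classical
  have h2 : (2:ℕ) ≤ q := by omega
  ext x y
  rw [signLap_apply]
  rcases x with i | s <;> rcases y with j | t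
  · rw [BpenBT_inl_inl]
    by_cases hij : i = j
    · subst hij
      rw [if_pos rfl, CqP_deg_inl hq i, if_neg (SimpleGraph.irrefl _)]
      rw [del_self, del_eq_zero (fin_ne_add_one h2 i), del_eq_zero (fin_ne_add_one h2 i).symm]
      by_cases hi : i = 0
      · rw [if_pos hi, del_eq_one hi]
        norm_num
      · rw [if_neg hi, del_eq_zero hi]
        norm_num
    · have hne : (Sum.inl i : VG q) ≠ Sum.inl j := fun hh => hij (Sum.inl_injective hh)
      rw [if_neg hne, del_eq_zero hij]
      have hzz : del i 0 * del j 0 = 0 := by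
        by_cases hi : i = 0
        · have hj : j ≠ 0 := fun hh => hij (hi.trans hh.symm)
          rw [del_eq_zero hj, mul_zero]
        · rw [del_eq_zero hi, zero_mul]
      rw [hzz]
      by_cases ha : j = i + 1 <;> by_cases hb : i = j + 1
      · exfalso
        have hv1 := congrArg Fin.val ha
        have hv2 := congrArg Fin.val hb
        rw [fin_val_add_one h2 i] at hv1
        rw [fin_val_add_one h2 j] at hv2
        have := i.isLt
        have := j.isLt
        split_ifs at hv1 hv2 <;> omega
      · rw [if_pos ((CqP_adj_inl_inl hq i j).mpr (Or.inl ha))]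
        rw [del_eq_zero hb, del_eq_one ha.symm]
        norm_num
      · rw [if_pos ((CqP_adj_inl_inl hq i j).mpr (Or.inr hb))]
        rw [del_eq_one hb, del_eq_zero (fun hh => ha hh.symm)]
        norm_num
      · rw [if_neg (fun hadj => by rcases (CqP_adj_inl_inl hq i j).mp hadj with h | h <;> tauto)]
        rw [del_eq_zero hb, del_eq_zero (fun hh => ha hh.symm)]
        norm_num
  · rw [BpenBT_inl_inr, if_neg (by simp)]
    by_cases hi : i = 0
    · rw [if_pos ((CqP_adj_inl_inr i t).mpr hi), del_eq_one hi]
      norm_num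
    · rw [if_neg (fun hadj => hi ((CqP_adj_inl_inr i t).mp hadj)), del_eq_zero hi]
      norm_num
  · rw [BpenBT_inr_inl, if_neg (by simp)]
    by_cases hj : j = 0
    · rw [if_pos (((CqP_adj_inl_inr j s).mpr hj).symm), del_eq_one hj]
      norm_num
    · rw [if_neg (fun hadj => hj ((CqP_adj_inl_inr j s).mp hadj.symm)), del_eq_zero hj]
      norm_num
  · rw [BpenBT_inr_inr]
    have hst : (Sum.inr s : VG q) = Sum.inr t := by rw [sigma_unique s, sigma_unique t]
    rw [if_pos hst, CqP_deg_inr s, if_neg (CqP_not_adj_inr_inr s t)]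
    norm_num

lemma BTBpen_inl_inl (e f : Fin q) :
    ((Bpen q)ᵀ * Bpen q) (Sum.inl e) (Sum.inl f)
      = 2 * del e f + del e (f + 1) + del (e + 1) f := by
  rw [Matrix.mul_apply]
  simp only [Matrix.transpose_apply, Bpen, Sum.elim_inl]
  rw [sum_del_pairs (Sum.inl e) (Sum.inl f) (Sum.inl (e + 1)) (Sum.inl (f + 1))]
  simp only [del_sum_inl_inl]
  rw [del_add_one]
  have h3 : del (e + 1) f = del f (e + 1) := del_comm _ _
  ring

lemma BTBpen_inl_inr (e : Fin q) (u : Fin 1) :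
    ((Bpen q)ᵀ * Bpen q) (Sum.inl e) (Sum.inr u) = del e 0 + del (e + 1) 0 := by
  rw [Matrix.mul_apply]
  simp only [Matrix.transpose_apply, Bpen, Sum.elim_inl, Sum.elim_inr]
  rw [sum_del_pairs (Sum.inl e) (Sum.inl 0) (Sum.inl (e + 1)) (Sum.inr (pvert q))]
  simp only [del_sum_inl_inl, del_sum_inl_inr, add_zero]

lemma BTBpen_inr_inl (u : Fin 1) (f : Fin q) :
    ((Bpen q)ᵀ * Bpen q) (Sum.inr u) (Sum.inl f) = del 0 f + del 0 (f + 1) := by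
  rw [Matrix.mul_apply]
  simp only [Matrix.transpose_apply, Bpen, Sum.elim_inl, Sum.elim_inr]
  rw [sum_del_pairs (Sum.inl 0) (Sum.inl f) (Sum.inr (pvert q)) (Sum.inl (f + 1))]
  simp only [del_sum_inl_inl, del_sum_inr_inl, add_zero]

lemma BTBpen_inr_inr (u v : Fin 1) :
    ((Bpen q)ᵀ * Bpen q) (Sum.inr u) (Sum.inr v) = 2 := by
  rw [Matrix.mul_apply]
  simp only [Matrix.transpose_apply, Bpen, Sum.elim_inr]
  rw [sum_del_pairs (Sum.inl 0) (Sum.inl 0) (Sum.inr (pvert q)) (Sum.inr (pvert q))]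
  simp only [del_sum_inl_inl, del_sum_inl_inr, del_sum_inr_inl, del_sigma, del_self]
  norm_num

lemma card_VG : Fintype.card (VG q) = q + 1 := by
  rw [Fintype.card_sum, Fintype.card_sigma, Fintype.card_fin]
  have h : ∀ i : Fin q, Fintype.card (Fin (pfun q i)) = if i = (0 : Fin q) then 1 else 0 := by
    intro i
    rw [Fintype.card_fin]
    by_cases hi : i = 0
    · rw [if_pos hi, hi]
      simp [pfun]
    · rw [if_neg hi]
      have hv : i.val ≠ 0 := fun hh => hi (Fin.ext hh)
      simp [pfun, hv]
  rw [Finset.sum_congr rfl fun i _ => h i, Finset.sum_ite_eq' Finset.univ (0 : Fin q) (fun _ => 1)]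
  simp

end PendantSide

section Final

open Matrix Sum

def edgeEquiv (n q : ℕ) (hn : n = q + 1) : Fin n ≃ (Fin q ⊕ Fin 1) where
  toFun e := if h : e.val < q then Sum.inl ⟨e.val, h⟩ else Sum.inr 0
  invFun f := Sum.elim (fun a => ⟨a.val, by omega⟩) (fun _ => ⟨q, by omega⟩) f
  left_inv e := by
    dsimp only
    by_cases h : e.val < q
    · rw [dif_pos h]
      rfl
    · rw [dif_neg h]
      apply Fin.ext
      show q = e.val
      have := e.isLt
      omega
  right_inv f := by
    dsimp only
    rcases f with a | u
    · show (if h : (⟨a.val, by omega⟩ : Fin n).val < q then Sum.inl (⟨(⟨a.val, by omega⟩ : Fin n).val, h⟩ : Fin q) else Sum.inr 0) = Sum.inl a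
      rw [dif_pos (show (⟨a.val, by omega⟩ : Fin n).val < q from a.isLt)]
    · show (if h : (⟨q, by omega⟩ : Fin n).val < q then Sum.inl (⟨(⟨q, by omega⟩ : Fin n).val, h⟩ : Fin q) else Sum.inr 0) = Sum.inr u
      rw [dif_neg (show ¬ (⟨q, by omega⟩ : Fin n).val < q from lt_irrefl q)]
      exact congrArg _ (Subsingleton.elim _ _)

variable {n q : ℕ} [NeZero n] [NeZero q]

lemma edgeEquiv_lt (hn : n = q + 1) (e : Fin n) (h : e.val < q) :
    edgeEquiv n q hn e = Sum.inl ⟨e.val, h⟩ := dif_pos h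

lemma edgeEquiv_ge (hn : n = q + 1) (e : Fin n) (h : ¬ e.val < q) :
    edgeEquiv n q hn e = Sum.inr 0 := dif_neg h

lemma M1_nonneg (e f : Fin n) : 0 ≤ ((Bcyc n)ᵀ * Bcyc n) e f := by
  rw [BTBcyc_apply]
  have h1 := del_nonneg e f
  have h2 := del_nonneg e (f + 1)
  have h3 := del_nonneg (e + 1) f
  linarith

lemma M_compare (hq : 3 ≤ q) (hn : n = q + 1) (e f : Fin n) :
    ((Bcyc n)ᵀ * Bcyc n) e f
      ≤ ((Bpen q)ᵀ * Bpen q) (edgeEquiv n q hn e) (edgeEquiv n q hn f) := by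
  have h2q : (2:ℕ) ≤ q := by omega
  have h2n : (2:ℕ) ≤ n := by omega
  have hel := e.isLt
  have hfl := f.isLt
  rw [BTBcyc_apply]
  by_cases he : e.val < q <;> by_cases hf : f.val < q
  · rw [edgeEquiv_lt hn e he, edgeEquiv_lt hn f hf, BTBpen_inl_inl]
    have d1 : del e f ≤ del (⟨e.val, he⟩ : Fin q) ⟨f.val, hf⟩ := by
      apply del_le_del
      intro h
      apply Fin.ext
      show e.val = f.val
      exact congrArg Fin.val h
    have d2 : del e (f + 1) ≤ del (⟨e.val, he⟩ : Fin q) ((⟨f.val, hf⟩ : Fin q) + 1) := by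
      apply del_le_del
      intro h
      have hv := congrArg Fin.val h
      rw [fin_val_add_one h2n f] at hv
      apply Fin.ext
      show e.val = ((⟨f.val, hf⟩ : Fin q) + 1).val
      rw [fin_val_add_one h2q]
      show e.val = if f.val + 1 = q then 0 else f.val + 1
      split_ifs at hv ⊢ <;> omega
    have d3 : del (e + 1) f ≤ del ((⟨e.val, he⟩ : Fin q) + 1) (⟨f.val, hf⟩ : Fin q) := by
      apply del_le_del
      intro h
      have hv := congrArg Fin.val h
      rw [fin_val_add_one h2n e] at hv
      apply Fin.ext
      show ((⟨e.val, he⟩ : Fin q) + 1).val = f.val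
      rw [fin_val_add_one h2q]
      show (if e.val + 1 = q then 0 else e.val + 1) = f.val
      split_ifs at hv ⊢ <;> omega
    linarith
  · rw [edgeEquiv_lt hn e he, edgeEquiv_ge hn f hf, BTBpen_inl_inr]
    have hfv : f.val = q := by omega
    have d0 : del e f = 0 := del_eq_zero (fun h => by
      have := congrArg Fin.val h
      omega)
    have d2 : del e (f + 1) ≤ del (⟨e.val, he⟩ : Fin q) 0 := by
      apply del_le_del
      intro h
      have hv := congrArg Fin.val h
      rw [fin_val_add_one h2n f] at hv
      apply Fin.ext
      show e.val = (0 : Fin q).val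
      rw [Fin.val_zero]
      split_ifs at hv <;> omega
    have d3 : del (e + 1) f ≤ del ((⟨e.val, he⟩ : Fin q) + 1) 0 := by
      apply del_le_del
      intro h
      have hv := congrArg Fin.val h
      rw [fin_val_add_one h2n e] at hv
      apply Fin.ext
      show ((⟨e.val, he⟩ : Fin q) + 1).val = (0 : Fin q).val
      rw [fin_val_add_one h2q, Fin.val_zero]
      show (if e.val + 1 = q then 0 else e.val + 1) = 0
      split_ifs at hv ⊢ <;> omega
    rw [d0]
    linarith
  · rw [edgeEquiv_ge hn e he, edgeEquiv_lt hn f hf, BTBpen_inr_inl]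
    have hev : e.val = q := by omega
    have d0 : del e f = 0 := del_eq_zero (fun h => by
      have := congrArg Fin.val h
      omega)
    have d2 : del e (f + 1) ≤ del (0 : Fin q) ((⟨f.val, hf⟩ : Fin q) + 1) := by
      apply del_le_del
      intro h
      have hv := congrArg Fin.val h
      rw [fin_val_add_one h2n f] at hv
      apply Fin.ext
      show (0 : Fin q).val = ((⟨f.val, hf⟩ : Fin q) + 1).val
      rw [fin_val_add_one h2q, Fin.val_zero]
      show 0 = if f.val + 1 = q then 0 else f.val + 1
      split_ifs at hv ⊢ <;> omega
    have d3 : del (e + 1) f ≤ del (0 : Fin q) (⟨f.val, hf⟩ : Fin q) := by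
      apply del_le_del
      intro h
      have hv := congrArg Fin.val h
      rw [fin_val_add_one h2n e] at hv
      apply Fin.ext
      show (0 : Fin q).val = f.val
      rw [Fin.val_zero]
      split_ifs at hv <;> omega
    rw [d0]
    linarith
  · rw [edgeEquiv_ge hn e he, edgeEquiv_ge hn f hf, BTBpen_inr_inr]
    have hef : e = f := Fin.ext (by omega)
    subst hef
    rw [del_self, del_eq_zero (fin_ne_add_one h2n e), del_eq_zero (fin_ne_add_one h2n e).symm]
    norm_num

end Final

section StrictVals

open Matrix Sum

variable {n q : ℕ} [NeZero n] [NeZero q]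

lemma BTBcyc_val0 (hn : 4 ≤ n) (a b : Fin n) (ha : a.val = 0) (hb : b.val = n - 2) :
    ((Bcyc n)ᵀ * Bcyc n) a b = 0 := by
  have h2n : (2:ℕ) ≤ n := by omega
  rw [BTBcyc_apply]
  rw [del_eq_zero (fun h => by rw [Fin.ext_iff, ha, hb] at h; omega)]
  rw [del_eq_zero (fun h => by
    rw [Fin.ext_iff, ha, fin_val_add_one h2n b, hb] at h
    split_ifs at h <;> omega)]
  rw [del_eq_zero (fun h => by
    rw [Fin.ext_iff, fin_val_add_one h2n a, ha, hb] at h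
    split_ifs at h <;> omega)]
  ring

lemma BTBpen_val1 (hq : 3 ≤ q) (a b : Fin q) (ha : a.val = 0) (hb : b.val = q - 1) :
    ((Bpen q)ᵀ * Bpen q) (Sum.inl a) (Sum.inl b) = 1 := by
  have h2q : (2:ℕ) ≤ q := by omega
  rw [BTBpen_inl_inl]
  rw [del_eq_zero (fun h => by rw [Fin.ext_iff, ha, hb] at h; omega)]
  rw [del_eq_one (by
    rw [Fin.ext_iff, ha, fin_val_add_one h2q b, hb]
    rw [if_pos (by omega)])]
  rw [del_eq_zero (fun h => by
    rw [Fin.ext_iff, fin_val_add_one h2q a, ha, hb] at h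
    split_ifs at h <;> omega)]
  ring

lemma BTBpen_val2 (hq : 3 ≤ q) (a b : Fin q) (ha : a.val = 0) (hb : b.val = q - 1) :
    0 < ((Bpen q)ᵀ * Bpen q) (Sum.inl b) (Sum.inl a) := by
  have h2q : (2:ℕ) ≤ q := by omega
  rw [BTBpen_inl_inl]
  rw [del_eq_zero (fun h => by rw [Fin.ext_iff, ha, hb] at h; omega)]
  rw [del_eq_zero (fun h => by
    rw [Fin.ext_iff, hb, fin_val_add_one h2q a, ha] at h
    split_ifs at h <;> omega)]
  rw [del_eq_one (by
    rw [Fin.ext_iff, fin_val_add_one h2q b, hb, ha]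
    rw [if_pos (by omega)])]
  norm_num

end StrictVals

set_option maxHeartbeats 2000000

/-- `SLEE(C_n) < SLEE(G₍₂₎)` for `n ≥ 4`. -/
theorem SLEE_cycle_lt_Gmin2 {n : ℕ} (hn : 4 ≤ n) :
    SLEE (cycleGraph' n) < SLEE (Gmin2 n) := by
  haveI : NeZero n := ⟨by omega⟩
  haveI : NeZero (n - 1) := ⟨by omega⟩
  have hq : 3 ≤ n - 1 := by omega
  have hnq : n = (n - 1) + 1 := by omega
  have hGmin : Gmin2 n = CqP (n - 1) (pfun (n - 1)) := rfl
  have hcomp := M_compare hq hnq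
  have hnn : ∀ e f : Fin n, 0 ≤ ((Bcyc n).transpose * Bcyc n) e f := M1_nonneg
  have key : ∀ k : ℕ, traceQpow (cycleGraph' n) k ≤ traceQpow (Gmin2 n) k := by
    intro k
    rw [hGmin]
    cases k with
    | zero =>
        rw [traceQpow_eq, traceQpow_eq, pow_zero, pow_zero, Matrix.trace_one, Matrix.trace_one]
        rw [card_VG, Fintype.card_fin]
        exact_mod_cast le_of_eq hnq
    | succ k =>
        rw [traceQpow_eq, traceQpow_eq, signLap_cycle hn, signLap_CqP hq]
        rw [trace_mul_pow_comm (Bcyc n) k, trace_mul_pow_comm (Bpen (n - 1)) k]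
        exact trace_pow_le _ _ (edgeEquiv n (n - 1) hnq) hnn hcomp (k + 1)
  have key2 : traceQpow (cycleGraph' n) 2 < traceQpow (Gmin2 n) 2 := by
    rw [hGmin, traceQpow_eq, traceQpow_eq, signLap_cycle hn, signLap_CqP hq]
    have t1 : ((Bcyc n * (Bcyc n).transpose) ^ 2).trace = (((Bcyc n).transpose * Bcyc n) ^ 2).trace := by
      rw [show (2:ℕ) = 1 + 1 from rfl]
      exact trace_mul_pow_comm (Bcyc n) 1
    have t2 : ((Bpen (n - 1) * (Bpen (n - 1)).transpose) ^ 2).trace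
        = (((Bpen (n - 1)).transpose * Bpen (n - 1)) ^ 2).trace := by
      rw [show (2:ℕ) = 1 + 1 from rfl]
      exact trace_mul_pow_comm (Bpen (n - 1)) 1
    rw [t1, t2]
    set i0 : Fin n := ⟨0, by omega⟩ with hi0def
    set j0 : Fin n := ⟨n - 2, by omega⟩ with hj0def
    have hi0 : i0.val < n - 1 := by
      show (0:ℕ) < n - 1
      omega
    have hj0 : j0.val < n - 1 := by
      show n - 2 < n - 1
      omega
    refine trace_sq_lt _ _ (edgeEquiv n (n - 1) hnq) hnn hcomp i0 j0 ?_ ?_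
    · rw [BTBcyc_val0 hn i0 j0 rfl rfl]
      rw [edgeEquiv_lt hnq i0 hi0, edgeEquiv_lt hnq j0 hj0]
      rw [BTBpen_val1 hq ⟨i0.val, hi0⟩ ⟨j0.val, hj0⟩ rfl (show n - 2 = n - 1 - 1 by omega)]
      norm_num
    · rw [edgeEquiv_lt hnq i0 hi0, edgeEquiv_lt hnq j0 hj0]
      exact BTBpen_val2 hq ⟨i0.val, hi0⟩ ⟨j0.val, hj0⟩ rfl (show n - 2 = n - 1 - 1 by omega)
  rw [SLEE_eq_tsum, SLEE_eq_tsum]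
  refine Summable.tsum_lt_tsum (fun k => ?_) (i := 2) ?_ (summable_SLEE _) (summable_SLEE _)
  · rw [div_eq_mul_inv, div_eq_mul_inv]
    exact mul_le_mul_of_nonneg_right (key k) (by positivity)
  · rw [div_eq_mul_inv, div_eq_mul_inv]
    exact mul_lt_mul_of_pos_right key2 (by positivity)
end
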